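/- arXiv:2512.19317 — 3 statements merged into one kernel-verified Lean document; each statement's English description precedes it below -/
import Mathlib

section
/- Fix a point x ∈ ℝ^d, an answer A ∈ 𝒜, and real numbers a ≥ b such that p_f(x, A) ≥ Φ(a) and p_f(x, B) ≤ Φ(b) for every B ∈ 𝒜 with B ≠ A. Then for every δ ∈ ℝ^d with ‖δ‖₂ < σ·(a − b)/2, one has p_f(x + δ, A) > p_f(x + δ, B) for every B ≠ A; that is, the smoothed classifier g(y) = argmax_{A ∈ 𝒜} p_f(y, A) still returns A at the perturbed input x + δ. (This is the L₂ certified robustness theorem of randomized smoothing, with the certified radius R = (σ/2)(Φ⁻¹(p_A) − Φ⁻¹(p_B)) expressed via a = Φ⁻¹(p_A), b = Φ⁻¹(p_B).) -/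
open MeasureTheory ProbabilityTheory

/-- The standard normal cumulative distribution function `Φ`. -/
noncomputable def stdNormalCDF (a : ℝ) : ℝ :=
  ((gaussianReal 0 1) (Set.Iic a)).toReal

/-- The isotropic Gaussian measure `N(x, σ²I)` on `ℝ^d`, realized as the translate by `x`
of the product of `d` copies of the real Gaussian `N(0, σ²)`. -/
noncomputable def isoGaussian (d : ℕ) (σ : ℝ) (x : EuclideanSpace ℝ (Fin d)) :
    Measure (EuclideanSpace ℝ (Fin d)) :=
  Measure.map (fun η => x + η)
    (Measure.map (MeasurableEquiv.toLp 2 (Fin d → ℝ))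
      (Measure.pi fun _ : Fin d => gaussianReal 0 (σ ^ 2).toNNReal))

/-- `p_f(x, A) = μ_x(f⁻¹({A}))`: the probability that the base classifier `f`
returns answer `A` on input `x + η`, `η ∼ N(0, σ²I)`. -/
noncomputable def classProb (d : ℕ) (σ : ℝ) {𝒜 : Type*}
    (f : EuclideanSpace ℝ (Fin d) → 𝒜) (x : EuclideanSpace ℝ (Fin d)) (A : 𝒜) : ℝ :=
  (isoGaussian d σ x (f ⁻¹' {A})).toReal

section RSAux
open MeasureTheory ProbabilityTheory Real Set ENNReal

section NP

variable {α : Type*} [MeasurableSpace α] (ν : Measure α) [IsFiniteMeasure ν]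

lemma rs_diff_le {S H : Set α} (hH : MeasurableSet H) (hS : MeasurableSet S)
    (hm : ν S ≤ ν H) : ν (S \ H) ≤ ν (H \ S) := by
  have h1 : ν (S \ H) + ν (S ∩ H) = ν S := measure_diff_add_inter S hH
  have h2 : ν (H \ S) + ν (H ∩ S) = ν H := measure_diff_add_inter H hS
  rw [Set.inter_comm] at h2
  have : ν (S \ H) + ν (S ∩ H) ≤ ν (H \ S) + ν (S ∩ H) := by
    rw [h1, h2]; exact hm
  exact (ENNReal.add_le_add_iff_right (measure_ne_top ν _)).mp this

/-- Neyman–Pearson, upper bound form: `H` is a superlevel-type set of `L`. -/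
lemma rs_np_le {L : α → ℝ≥0∞} (hL : Measurable L) (K : ℝ≥0∞) {S H : Set α}
    (hS : MeasurableSet S) (hH : MeasurableSet H)
    (h1 : ∀ y ∈ H, K ≤ L y) (h2 : ∀ y ∉ H, L y ≤ K) (hm : ν S ≤ ν H) :
    ∫⁻ y in S, L y ∂ν ≤ ∫⁻ y in H, L y ∂ν := by
  have hdisj : Disjoint (S ∩ H) (S \ H) := Set.disjoint_left.2 fun y hy hy' => hy'.2 hy.2
  have hdisj' : Disjoint (H ∩ S) (H \ S) := Set.disjoint_left.2 fun y hy hy' => hy'.2 hy.2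
  calc ∫⁻ y in S, L y ∂ν = ∫⁻ y in (S ∩ H) ∪ (S \ H), L y ∂ν := by
        rw [Set.inter_union_diff]
    _ = ∫⁻ y in S ∩ H, L y ∂ν + ∫⁻ y in S \ H, L y ∂ν :=
        lintegral_union (hS.diff hH) hdisj
    _ ≤ ∫⁻ y in S ∩ H, L y ∂ν + ∫⁻ y in H \ S, L y ∂ν := by
        gcongr _ + ?_
        calc ∫⁻ y in S \ H, L y ∂ν ≤ ∫⁻ _ in S \ H, K ∂ν :=
              setLIntegral_mono measurable_const fun y hy => h2 y hy.2
          _ = K * ν (S \ H) := setLIntegral_const _ _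
          _ ≤ K * ν (H \ S) := mul_le_mul_right (rs_diff_le ν hH hS hm) K
          _ = ∫⁻ _ in H \ S, K ∂ν := (setLIntegral_const _ _).symm
          _ ≤ ∫⁻ y in H \ S, L y ∂ν :=
              setLIntegral_mono hL fun y hy => h1 y hy.1
    _ = ∫⁻ y in S ∩ H, L y ∂ν + ∫⁻ y in H \ S, L y ∂ν := rfl
    _ = ∫⁻ y in (H ∩ S) ∪ (H \ S), L y ∂ν := by
        rw [lintegral_union (hH.diff hS) hdisj', Set.inter_comm S H]
    _ = ∫⁻ y in H, L y ∂ν := by rw [Set.inter_union_diff]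

/-- Neyman–Pearson, lower bound form: `H` is a sublevel-type set of `L`. -/
lemma rs_np_ge {L : α → ℝ≥0∞} (hL : Measurable L) (K : ℝ≥0∞) {S H : Set α}
    (hS : MeasurableSet S) (hH : MeasurableSet H)
    (h1 : ∀ y ∈ H, L y ≤ K) (h2 : ∀ y ∉ H, K ≤ L y) (hm : ν H ≤ ν S) :
    ∫⁻ y in H, L y ∂ν ≤ ∫⁻ y in S, L y ∂ν := by
  have hdisj : Disjoint (S ∩ H) (S \ H) := Set.disjoint_left.2 fun y hy hy' => hy'.2 hy.2
  have hdisj' : Disjoint (H ∩ S) (H \ S) := Set.disjoint_left.2 fun y hy hy' => hy'.2 hy.2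
  calc ∫⁻ y in H, L y ∂ν = ∫⁻ y in (H ∩ S) ∪ (H \ S), L y ∂ν := by
        rw [Set.inter_union_diff]
    _ = ∫⁻ y in H ∩ S, L y ∂ν + ∫⁻ y in H \ S, L y ∂ν :=
        lintegral_union (hH.diff hS) hdisj'
    _ ≤ ∫⁻ y in H ∩ S, L y ∂ν + ∫⁻ y in S \ H, L y ∂ν := by
        gcongr _ + ?_
        calc ∫⁻ y in H \ S, L y ∂ν ≤ ∫⁻ _ in H \ S, K ∂ν :=
              setLIntegral_mono measurable_const fun y hy => h1 y hy.1
          _ = K * ν (H \ S) := setLIntegral_const _ _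
          _ ≤ K * ν (S \ H) := mul_le_mul_right (rs_diff_le ν hS hH hm) K
          _ = ∫⁻ _ in S \ H, K ∂ν := (setLIntegral_const _ _).symm
          _ ≤ ∫⁻ y in S \ H, L y ∂ν :=
              setLIntegral_mono hL fun y hy => h2 y hy.2
    _ = ∫⁻ y in (S ∩ H) ∪ (S \ H), L y ∂ν := by
        rw [lintegral_union (hS.diff hH) hdisj, Set.inter_comm H S]
    _ = ∫⁻ y in S, L y ∂ν := by rw [Set.inter_union_diff]

end NP

section MapWD

/-- Pushing forward a `withDensity` measure along a measurable equivalence. -/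
lemma rs_map_withDensity {α β : Type*} [MeasurableSpace α] [MeasurableSpace β]
    (g : α ≃ᵐ β) (μ : Measure α) {h : β → ℝ≥0∞} (hh : Measurable h) :
    Measure.map g (μ.withDensity (h ∘ g)) = (Measure.map g μ).withDensity h := by
  ext s hs
  rw [Measure.map_apply g.measurable hs, withDensity_apply _ (g.measurable hs),
    withDensity_apply _ hs, setLIntegral_map hs hh g.measurable]
  rfl

lemma rs_prod_withDensity {α β : Type*} [MeasurableSpace α] [MeasurableSpace β]
    (μ : Measure α) (ρ : Measure β) [SigmaFinite μ] [SigmaFinite ρ]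
    {h : α → ℝ≥0∞} {g : β → ℝ≥0∞} (hh : Measurable h) (hg : Measurable g)
    [SigmaFinite (ρ.withDensity g)] [SigmaFinite (μ.withDensity h)] :
    (μ.withDensity h).prod (ρ.withDensity g)
      = (μ.prod ρ).withDensity (fun p => h p.1 * g p.2) := by
  refine (Measure.prod_eq (μ := μ.withDensity h) (ν := ρ.withDensity g) fun s t hs ht => ?_)
  rw [withDensity_apply _ (hs.prod ht), ← Measure.prod_restrict s t,
    lintegral_prod (fun p => h p.1 * g p.2) (((hh.comp measurable_fst).mul (hg.comp measurable_snd)).aemeasurable)]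
  simp only
  rw [withDensity_apply _ hs, withDensity_apply _ ht]
  calc ∫⁻ x, ∫⁻ y, h x * g y ∂ρ.restrict t ∂μ.restrict s
      = ∫⁻ x, h x * ∫⁻ y, g y ∂ρ.restrict t ∂μ.restrict s := by
        congr 1; ext x; exact lintegral_const_mul _ hg
    _ = (∫⁻ x, h x ∂μ.restrict s) * ∫⁻ y, g y ∂ρ.restrict t :=
        lintegral_mul_const _ hh

end MapWD

section Gauss1D

lemma rs_gauss_CM_1d {v : NNReal} (hv : v ≠ 0) (c : ℝ) :
    gaussianReal c v = (gaussianReal 0 v).withDensity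
      (fun t => ENNReal.ofReal (Real.exp ((c * t - c ^ 2 / 2) / v))) := by
  have hmeas : Measurable fun t : ℝ => ENNReal.ofReal (Real.exp ((c * t - c ^ 2 / 2) / v)) := by
    fun_prop
  rw [gaussianReal_of_var_ne_zero _ hv, gaussianReal_of_var_ne_zero _ hv,
    ← withDensity_mul _ (measurable_gaussianPDF 0 v) hmeas]
  congr 1
  funext t
  have hvpos : (0 : ℝ) < (v : ℝ) := by positivity
  simp only [Pi.mul_apply, gaussianPDF_def]
  rw [← ENNReal.ofReal_mul (gaussianPDFReal_nonneg 0 v t)]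
  congr 1
  unfold gaussianPDFReal
  have hexp : -(t - c) ^ 2 / (2 * (v : ℝ)) = -(t - 0) ^ 2 / (2 * (v : ℝ)) + (c * t - c ^ 2 / 2) / (v : ℝ) := by
    field_simp
    ring
  rw [hexp, Real.exp_add, ← mul_assoc]

lemma rs_pi_gauss_density {v : NNReal} (hv : v ≠ 0) (n : ℕ) :
    Measure.pi (fun _ : Fin n => gaussianReal 0 v)
      = (Measure.pi fun _ : Fin n => (volume : Measure ℝ)).withDensity
          (fun z => ∏ i, gaussianPDF 0 v (z i)) := by
  induction n with
  | zero =>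
      have h1 : (fun z : Fin 0 → ℝ => ∏ i, gaussianPDF 0 v (z i))
          = (1 : (Fin 0 → ℝ) → ENNReal) := by
        funext z; simp
      rw [h1, withDensity_one, Measure.pi_of_empty, Measure.pi_of_empty]
  | succ n ih =>
      set φ := MeasurableEquiv.piFinSuccAbove (fun _ : Fin (n + 1) => ℝ) 0 with hφ
      have hG := measurePreserving_piFinSuccAbove (fun _ : Fin (n + 1) => gaussianReal 0 v) 0
      have hV := measurePreserving_piFinSuccAbove (fun _ : Fin (n + 1) => (volume : Measure ℝ)) 0
      have hGsymm := (hG.symm φ).map_eq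
      have hVsymm := (hV.symm φ).map_eq
      have hFmeas : Measurable fun z : Fin (n + 1) → ℝ => ∏ i, gaussianPDF 0 v (z i) :=
        Finset.measurable_prod _ fun i _ => (measurable_gaussianPDF 0 v).comp (measurable_pi_apply i)
      haveI : SigmaFinite ((volume : Measure ℝ).withDensity (gaussianPDF 0 v)) := by
        rw [← gaussianReal_of_var_ne_zero (0 : ℝ) hv]; infer_instance
      haveI : SigmaFinite ((Measure.pi fun _ : Fin n => (volume : Measure ℝ)).withDensity
          (fun z => ∏ i, gaussianPDF 0 v (z i))) := by
        rw [← ih]; infer_instance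
      calc Measure.pi (fun _ : Fin (n + 1) => gaussianReal 0 v)
          = Measure.map φ.symm ((gaussianReal 0 v).prod
              (Measure.pi fun _ : Fin n => gaussianReal 0 v)) := hGsymm.symm
        _ = Measure.map φ.symm ((volume.withDensity (gaussianPDF 0 v)).prod
              ((Measure.pi fun _ : Fin n => (volume : Measure ℝ)).withDensity
                (fun z => ∏ i, gaussianPDF 0 v (z i)))) := by
            rw [← gaussianReal_of_var_ne_zero _ hv, ← ih]
        _ = Measure.map φ.symm ((volume.prod (Measure.pi fun _ : Fin n => (volume : Measure ℝ))).withDensity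
              (fun p => gaussianPDF 0 v p.1 * ∏ i, gaussianPDF 0 v (p.2 i))) := by
            rw [rs_prod_withDensity (g := fun z : Fin n → ℝ => ∏ i, gaussianPDF 0 v (z i)) _ _
              (measurable_gaussianPDF 0 v)
              (Finset.measurable_prod _ fun i _ =>
                (measurable_gaussianPDF 0 v).comp (measurable_pi_apply i))]
        _ = Measure.map φ.symm ((volume.prod (Measure.pi fun _ : Fin n => (volume : Measure ℝ))).withDensity
              ((fun z : Fin (n+1) → ℝ => ∏ i, gaussianPDF 0 v (z i)) ∘ φ.symm)) := by
            refine congrArg (Measure.map φ.symm) (congrArg _ (funext fun p => ?_))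
            simp only [Function.comp_apply]
            have h0 : (φ.symm p) 0 = p.1 := congrArg Prod.fst (φ.apply_symm_apply p)
            have hsucc : ∀ j : Fin n, (φ.symm p) ((0 : Fin (n+1)).succAbove j) = p.2 j :=
              fun j => congrFun (congrArg Prod.snd (φ.apply_symm_apply p)) j
            have hsucc' : ∀ j : Fin n, (φ.symm p) j.succ = p.2 j := by
              intro j
              rw [← congrFun Fin.succAbove_zero j]
              exact hsucc j
            rw [Fin.prod_univ_succ, h0]
            exact congrArg _ (Finset.prod_congr rfl fun j _ => by rw [hsucc' j])
        _ = (Measure.map φ.symm (volume.prod (Measure.pi fun _ : Fin n => (volume : Measure ℝ)))).withDensity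
              (fun z => ∏ i, gaussianPDF 0 v (z i)) := rs_map_withDensity φ.symm _ hFmeas
        _ = (Measure.pi fun _ : Fin (n+1) => (volume : Measure ℝ)).withDensity
              (fun z => ∏ i, gaussianPDF 0 v (z i)) := by rw [hVsymm]

end Gauss1D

section Euclid

/-- The centered isotropic Gaussian on Euclidean space. -/
noncomputable def rsNu (d : ℕ) (v : NNReal) : Measure (EuclideanSpace ℝ (Fin d)) :=
  Measure.map (MeasurableEquiv.toLp 2 (Fin d → ℝ))
    (Measure.pi fun _ : Fin d => gaussianReal 0 v)

instance rsNu_prob (d : ℕ) (v : NNReal) : IsProbabilityMeasure (rsNu d v) := by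
  unfold rsNu
  exact Measure.isProbabilityMeasure_map (Measurable.aemeasurable (MeasurableEquiv.measurable _))

variable {d : ℕ} {v : NNReal}

lemma rsNu_density (hv : v ≠ 0) :
    rsNu d v = (volume : Measure (EuclideanSpace ℝ (Fin d))).withDensity
      (fun y => ∏ i, gaussianPDF 0 v (y i)) := by
  have hmeas : Measurable fun y : EuclideanSpace ℝ (Fin d) => ∏ i, gaussianPDF 0 v (y i) :=
    Finset.measurable_prod _ fun i _ =>
      (measurable_gaussianPDF 0 v).comp ((measurable_pi_apply i).comp
        (MeasurableEquiv.toLp 2 (Fin d → ℝ)).symm.measurable)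
  have hcomp : (fun y : EuclideanSpace ℝ (Fin d) => ∏ i, gaussianPDF 0 v (y i))
      ∘ (MeasurableEquiv.toLp 2 (Fin d → ℝ))
      = fun z : Fin d → ℝ => ∏ i, gaussianPDF 0 v (z i) := rfl
  rw [rsNu, rs_pi_gauss_density hv d, ← volume_pi, ← hcomp,
    rs_map_withDensity (MeasurableEquiv.toLp 2 (Fin d → ℝ)) _ hmeas,
    show Measure.map (MeasurableEquiv.toLp 2 (Fin d → ℝ)) volume = volume from
      (PiLp.volume_preserving_toLp (Fin d)).map_eq]

lemma rsNu_density_norm (hv : v ≠ 0) (y : EuclideanSpace ℝ (Fin d)) :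
    (∏ i, gaussianPDF 0 v (y i))
      = ENNReal.ofReal ((Real.sqrt (2 * π * v))⁻¹ ^ d * Real.exp (-‖y‖ ^ 2 / (2 * v))) := by
  have hnorm : ‖y‖ ^ 2 = ∑ i, (y i) ^ 2 := by
    rw [EuclideanSpace.norm_eq]
    rw [Real.sq_sqrt (by positivity)]
    exact Finset.sum_congr rfl fun i _ => by rw [Real.norm_eq_abs, sq_abs]
  simp only [gaussianPDF_def]
  rw [← ENNReal.ofReal_prod_of_nonneg (fun i _ => gaussianPDFReal_nonneg 0 v (y i))]
  congr 1
  unfold gaussianPDFReal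
  rw [Finset.prod_mul_distrib, Finset.prod_const, ← Real.exp_sum]
  congr 1
  · simp
  · rw [hnorm]
    congr 1
    rw [← Finset.sum_div, ← Finset.sum_neg_distrib]
    congr 1
    exact Finset.sum_congr rfl fun i _ => by ring

lemma rsNu_rotation (hv : v ≠ 0)
    (O : EuclideanSpace ℝ (Fin d) ≃ₗᵢ[ℝ] EuclideanSpace ℝ (Fin d)) :
    Measure.map O (rsNu d v) = rsNu d v := by
  have hmeas : Measurable fun y : EuclideanSpace ℝ (Fin d) => ∏ i, gaussianPDF 0 v (y i) := by
    rw [funext (rsNu_density_norm hv)]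
    fun_prop
  have hOD : (fun y : EuclideanSpace ℝ (Fin d) => ∏ i, gaussianPDF 0 v (y i))
      ∘ (O.toHomeomorph.toMeasurableEquiv : EuclideanSpace ℝ (Fin d) ≃ᵐ EuclideanSpace ℝ (Fin d))
      = fun y => ∏ i, gaussianPDF 0 v (y i) := by
    funext y
    simp only [Function.comp_apply]
    rw [rsNu_density_norm hv, rsNu_density_norm hv]
    congr 3
    exact congrArg Norm.norm (rfl : (O.toHomeomorph.toMeasurableEquiv y : EuclideanSpace ℝ (Fin d)) = O y) ▸
      (by rw [show (O.toHomeomorph.toMeasurableEquiv y : EuclideanSpace ℝ (Fin d)) = O y from rfl,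
        O.norm_map])
  have hmapvol : Measure.map (⇑O.toHomeomorph.toMeasurableEquiv)
      (volume : Measure (EuclideanSpace ℝ (Fin d))) = volume := O.measurePreserving.map_eq
  calc Measure.map (⇑O) (rsNu d v)
      = Measure.map (⇑O.toHomeomorph.toMeasurableEquiv) (rsNu d v) := rfl
    _ = Measure.map (⇑O.toHomeomorph.toMeasurableEquiv)
          (volume.withDensity ((fun y => ∏ i, gaussianPDF 0 v (y i))
            ∘ O.toHomeomorph.toMeasurableEquiv)) := by rw [hOD, ← rsNu_density hv]
    _ = (Measure.map (⇑O.toHomeomorph.toMeasurableEquiv) volume).withDensity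
          (fun y => ∏ i, gaussianPDF 0 v (y i)) :=
        rs_map_withDensity O.toHomeomorph.toMeasurableEquiv _ hmeas
    _ = rsNu d v := by rw [hmapvol, ← rsNu_density hv]

end Euclid

section EuclidLaw

variable {n : ℕ} {v : NNReal}

lemma rsNu_eval0 :
    Measure.map (fun y : EuclideanSpace ℝ (Fin (n + 1)) => y 0) (rsNu (n + 1) v)
      = gaussianReal 0 v := by
  have h1 : Measure.map (fun y : EuclideanSpace ℝ (Fin (n + 1)) => y 0) (rsNu (n + 1) v)
      = Measure.map (fun z : Fin (n + 1) → ℝ => z 0)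
          (Measure.pi fun _ : Fin (n + 1) => gaussianReal 0 v) := by
    rw [rsNu, Measure.map_map (show Measurable fun y : EuclideanSpace ℝ (Fin (n + 1)) => y 0
      from (measurable_pi_apply 0).comp (MeasurableEquiv.toLp 2 (Fin (n + 1) → ℝ)).symm.measurable) (MeasurableEquiv.measurable _)]
    rfl
  rw [h1]
  have hφ := measurePreserving_piFinSuccAbove (fun _ : Fin (n + 1) => gaussianReal 0 v) 0
  have h2 : (fun z : Fin (n + 1) → ℝ => z 0)
      = Prod.fst ∘ (MeasurableEquiv.piFinSuccAbove (fun _ : Fin (n + 1) => ℝ) 0) := rfl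
  rw [h2, ← Measure.map_map measurable_fst (MeasurableEquiv.measurable _), hφ.map_eq,
    Measure.map_fst_prod]
  simp

lemma rsNu_inner (hv : v ≠ 0) (u : EuclideanSpace ℝ (Fin (n + 1))) (hu : ‖u‖ = 1) :
    Measure.map (fun y : EuclideanSpace ℝ (Fin (n + 1)) => (inner ℝ u y : ℝ)) (rsNu (n + 1) v)
      = gaussianReal 0 v := by
  set u₀ : EuclideanSpace ℝ (Fin (n + 1)) := EuclideanSpace.single 0 1 with hu₀def
  have hnorms : ‖u‖ = ‖u₀‖ := by
    rw [hu, hu₀def, EuclideanSpace.norm_single]; norm_num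
  set O := Submodule.reflection (Submodule.span ℝ {u - u₀})ᗮ with hOdef
  have hOu : O u = u₀ := Submodule.reflection_sub hnorms
  have hinner : ∀ y : EuclideanSpace ℝ (Fin (n + 1)), (inner ℝ u y : ℝ) = (O y) 0 := by
    intro y
    calc (inner ℝ u y : ℝ) = inner ℝ (O u) (O y) := (O.inner_map_map u y).symm
      _ = inner ℝ u₀ (O y) := by rw [hOu]
      _ = (O y) 0 := by rw [hu₀def, EuclideanSpace.inner_single_left]; simp
  have hcomp : (fun y : EuclideanSpace ℝ (Fin (n + 1)) => (inner ℝ u y : ℝ))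
      = (fun y : EuclideanSpace ℝ (Fin (n + 1)) => y 0) ∘ ⇑O := funext hinner
  rw [hcomp, ← Measure.map_map (show Measurable fun y : EuclideanSpace ℝ (Fin (n + 1)) => y 0
      from (measurable_pi_apply 0).comp (MeasurableEquiv.toLp 2 (Fin (n + 1) → ℝ)).symm.measurable) O.continuous.measurable,
    rsNu_rotation hv O, rsNu_eval0]

end EuclidLaw

section CM

variable {n : ℕ} {v : NNReal}

lemma rs_target_meas (δ : EuclideanSpace ℝ (Fin (n + 1))) :
    Measurable fun y : EuclideanSpace ℝ (Fin (n + 1)) =>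
      ENNReal.ofReal (Real.exp (((inner ℝ δ y : ℝ) - ‖δ‖ ^ 2 / 2) / v)) := by
  apply ENNReal.measurable_ofReal.comp
  apply Real.measurable_exp.comp
  apply Measurable.div_const
  apply Measurable.sub_const
  exact Continuous.measurable (Continuous.inner continuous_const continuous_id)

lemma rsNu_CM (hv : v ≠ 0) (δ : EuclideanSpace ℝ (Fin (n + 1))) :
    Measure.map (fun y : EuclideanSpace ℝ (Fin (n + 1)) => y + δ) (rsNu (n + 1) v)
      = (rsNu (n + 1) v).withDensity
          (fun y => ENNReal.ofReal (Real.exp (((inner ℝ δ y : ℝ) - ‖δ‖ ^ 2 / 2) / v))) := by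
  by_cases hδ : δ = 0
  · subst hδ
    have h1 : (fun y : EuclideanSpace ℝ (Fin (n + 1)) => y + 0) = id := by
      funext y; simp
    have h2 : (fun y : EuclideanSpace ℝ (Fin (n + 1)) =>
        ENNReal.ofReal (Real.exp (((inner ℝ (0 : EuclideanSpace ℝ (Fin (n+1))) y : ℝ)
          - ‖(0 : EuclideanSpace ℝ (Fin (n+1)))‖ ^ 2 / 2) / v)))
        = (1 : EuclideanSpace ℝ (Fin (n + 1)) → ℝ≥0∞) := by
      funext y; simp
    rw [h1, h2, Measure.map_id, withDensity_one]
  -- some abbreviations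
  set ν := rsNu (n + 1) v with hνdef
  set c : ℝ := ‖δ‖ with hcdef
  have hc : 0 < c := by simpa [hcdef] using norm_pos_iff.2 hδ
  set u : EuclideanSpace ℝ (Fin (n + 1)) := c⁻¹ • δ with hudef
  have hu : ‖u‖ = 1 := by
    rw [hudef, norm_smul, norm_inv, Real.norm_eq_abs, abs_of_pos hc, ← hcdef,
      inv_mul_cancel₀ hc.ne']
  have hδu : δ = c • u := by rw [hudef, smul_inv_smul₀ hc.ne']
  set u₀ : EuclideanSpace ℝ (Fin (n + 1)) := EuclideanSpace.single 0 1 with hu₀def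
  have hnorms : ‖u‖ = ‖u₀‖ := by rw [hu, hu₀def, EuclideanSpace.norm_single]; norm_num
  set O := Submodule.reflection (Submodule.span ℝ {u - u₀})ᗮ with hOdef
  have hOu : O u = u₀ := Submodule.reflection_sub hnorms
  have hOO : ∀ y : EuclideanSpace ℝ (Fin (n + 1)), O (O y) = y := fun y => Submodule.reflection_reflection _ y
  have hOu₀ : O u₀ = u := by rw [← hOu, hOO]
  have hOδ : O δ = c • u₀ := by rw [hδu, O.map_smul, hOu]
  set δ' : EuclideanSpace ℝ (Fin (n + 1)) := c • u₀ with hδ'def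
  set H : ℝ → ℝ≥0∞ := fun t => ENNReal.ofReal (Real.exp ((c * t - c ^ 2 / 2) / v)) with hHdef
  have hHmeas : Measurable H := by
    apply ENNReal.measurable_ofReal.comp
    apply Real.measurable_exp.comp
    fun_prop
  have hH0meas : Measurable fun y : EuclideanSpace ℝ (Fin (n + 1)) => H (y 0) :=
    hHmeas.comp ((measurable_pi_apply 0).comp (MeasurableEquiv.toLp 2 (Fin (n + 1) → ℝ)).symm.measurable)
  -- the pi-side equivalence
  set ψ := (MeasurableEquiv.toLp 2 (Fin (n + 1) → ℝ)).symm.trans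
    (MeasurableEquiv.piFinSuccAbove (fun _ : Fin (n + 1) => ℝ) 0) with hψdef
  have hψν : Measure.map ψ ν = (gaussianReal 0 v).prod
      (Measure.pi fun _ : Fin n => gaussianReal 0 v) := by
    have hφ := measurePreserving_piFinSuccAbove (fun _ : Fin (n + 1) => gaussianReal 0 v) 0
    rw [hνdef, rsNu, Measure.map_map ψ.measurable (MeasurableEquiv.measurable _)]
    have : ⇑ψ ∘ ⇑(MeasurableEquiv.toLp 2 (Fin (n + 1) → ℝ))
        = ⇑(MeasurableEquiv.piFinSuccAbove (fun _ : Fin (n + 1) => ℝ) 0) := rfl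
    rw [this, hφ.map_eq]
  -- Step A : shift along δ'
  have stepA : Measure.map (fun y : EuclideanSpace ℝ (Fin (n + 1)) => y + δ') ν = ν.withDensity (fun y => H (y 0)) := by
    have hcomm : ⇑ψ ∘ (fun y : EuclideanSpace ℝ (Fin (n + 1)) => y + δ') = (Prod.map (· + c) id) ∘ ⇑ψ := by
      funext y
      apply Prod.ext
      · show (y + δ') 0 = y 0 + c
        have : δ' 0 = c := by
          rw [hδ'def]
          show c * (EuclideanSpace.single (0 : Fin (n+1)) (1:ℝ)) 0 = c
          rw [EuclideanSpace.single_apply]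
          simp
        show y 0 + δ' 0 = y 0 + c
        rw [this]
      · show (fun j : Fin n => (y + δ') ((0 : Fin (n+1)).succAbove j))
            = fun j => y ((0 : Fin (n+1)).succAbove j)
        funext j
        show y _ + δ' _ = y _
        have : δ' ((0 : Fin (n+1)).succAbove j) = 0 := by
          rw [hδ'def]
          show c * (EuclideanSpace.single (0 : Fin (n+1)) (1:ℝ)) ((0 : Fin (n+1)).succAbove j) = 0
          rw [EuclideanSpace.single_apply, if_neg, mul_zero]
          rw [congrFun Fin.succAbove_zero j]
          exact Fin.succ_ne_zero j
        rw [this, add_zero]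
    haveI : SigmaFinite ((gaussianReal 0 v).withDensity H) := by
      rw [← rs_gauss_CM_1d hv c]; infer_instance
    haveI : SigmaFinite ((Measure.pi fun _ : Fin n => gaussianReal 0 v).withDensity
        (fun _ => (1 : ℝ≥0∞))) := by
      rw [show (fun _ : Fin n → ℝ => (1:ℝ≥0∞)) = (1 : (Fin n → ℝ) → ℝ≥0∞) from rfl,
        withDensity_one]
      infer_instance
    have key : Measure.map ψ (Measure.map (fun y : EuclideanSpace ℝ (Fin (n + 1)) => y + δ') ν)
        = Measure.map ψ (ν.withDensity (fun y => H (y 0))) := by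
      calc Measure.map ψ (Measure.map (fun y : EuclideanSpace ℝ (Fin (n + 1)) => y + δ') ν)
          = Measure.map (⇑ψ ∘ (fun y : EuclideanSpace ℝ (Fin (n + 1)) => y + δ')) ν :=
            Measure.map_map ψ.measurable (measurable_add_const δ')
        _ = Measure.map ((Prod.map (· + c) id) ∘ ⇑ψ) ν := by rw [hcomm]
        _ = Measure.map (Prod.map (· + c) id) (Measure.map ψ ν) :=
            (Measure.map_map (Measurable.prodMap (measurable_add_const c) measurable_id)
              ψ.measurable).symm
        _ = (Measure.map (· + c) (gaussianReal 0 v)).prod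
              (Measure.map id (Measure.pi fun _ : Fin n => gaussianReal 0 v)) := by
            rw [hψν, Measure.map_prod_map _ _ (measurable_add_const c) measurable_id]
        _ = (gaussianReal c v).prod (Measure.pi fun _ : Fin n => gaussianReal 0 v) := by
            rw [gaussianReal_map_add_const c, zero_add, Measure.map_id]
        _ = ((gaussianReal 0 v).withDensity H).prod
              ((Measure.pi fun _ : Fin n => gaussianReal 0 v).withDensity (fun _ => 1)) := by
            rw [← rs_gauss_CM_1d hv c,
              show (fun _ : Fin n → ℝ => (1:ℝ≥0∞)) = (1 : (Fin n → ℝ) → ℝ≥0∞) from rfl,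
              withDensity_one]
        _ = ((gaussianReal 0 v).prod (Measure.pi fun _ : Fin n => gaussianReal 0 v)).withDensity
              (fun p => H p.1 * 1) :=
            rs_prod_withDensity _ _ hHmeas measurable_const
        _ = (Measure.map ψ ν).withDensity (fun p => H p.1) := by
            rw [hψν]; simp only [mul_one]
        _ = Measure.map ψ (ν.withDensity ((fun p : ℝ × (Fin n → ℝ) => H p.1) ∘ ⇑ψ)) :=
            (rs_map_withDensity ψ _ (hHmeas.comp measurable_fst)).symm
        _ = Measure.map ψ (ν.withDensity (fun y => H (y 0))) := rfl
    have h := congrArg (Measure.map ⇑ψ.symm) key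
    rwa [MeasurableEquiv.map_symm_map, MeasurableEquiv.map_symm_map] at h
  -- Step B : transport along the reflection O
  have hOmeas : Measurable (⇑O) := O.continuous.measurable
  have hOsymmmeas : Measurable (⇑O.symm) := O.symm.continuous.measurable
  have hcompO : (fun y : EuclideanSpace ℝ (Fin (n + 1)) => y + δ) = ⇑O.symm ∘ (fun y : EuclideanSpace ℝ (Fin (n + 1)) => y + δ') ∘ ⇑O := by
    funext y
    show y + δ = O.symm (O y + δ')
    rw [map_add O.symm, O.symm_apply_apply]
    congr 1
    rw [hOdef, Submodule.reflection_symm, ← hOdef, ← hOδ, hOO]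
  have htarg : (fun y : EuclideanSpace ℝ (Fin (n + 1)) =>
        ENNReal.ofReal (Real.exp (((inner ℝ δ y : ℝ) - ‖δ‖ ^ 2 / 2) / v))) ∘ ⇑O.symm
      = fun y => H (y 0) := by
    funext y
    simp only [Function.comp_apply]
    have h1 : (inner ℝ δ (O.symm y) : ℝ) = c * y 0 := by
      calc (inner ℝ δ (O.symm y) : ℝ) = inner ℝ (O δ) (O (O.symm y)) := (O.inner_map_map _ _).symm
        _ = inner ℝ (c • u₀) y := by rw [hOδ, O.apply_symm_apply]
        _ = c * (inner ℝ u₀ y : ℝ) := real_inner_smul_left _ _ _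
        _ = c * y 0 := by
            rw [hu₀def, EuclideanSpace.inner_single_left]
            simp
    rw [h1, hHdef, ← hcdef]
  -- conclude
  have hO' : Measure.map (⇑O) ν = ν := by rw [hνdef]; exact rsNu_rotation hv O
  have hOsymm' : Measure.map (⇑O.symm) ν = ν := by rw [hνdef]; exact rsNu_rotation hv O.symm
  calc Measure.map (fun y : EuclideanSpace ℝ (Fin (n + 1)) => y + δ) ν
      = Measure.map (⇑O.symm ∘ (fun y : EuclideanSpace ℝ (Fin (n + 1)) => y + δ') ∘ ⇑O) ν := by rw [hcompO]
    _ = Measure.map (⇑O.symm) (Measure.map ((fun y : EuclideanSpace ℝ (Fin (n + 1)) => y + δ') ∘ ⇑O) ν) :=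
        (Measure.map_map hOsymmmeas ((measurable_add_const δ').comp hOmeas)).symm
    _ = Measure.map (⇑O.symm) (Measure.map (fun y : EuclideanSpace ℝ (Fin (n + 1)) => y + δ') (Measure.map (⇑O) ν)) := by
        rw [Measure.map_map (measurable_add_const δ') hOmeas]
    _ = Measure.map (⇑O.symm) (ν.withDensity (fun y => H (y 0))) := by rw [hO', stepA]
    _ = Measure.map (⇑O.symm.toHomeomorph.toMeasurableEquiv)
          (ν.withDensity ((fun y : EuclideanSpace ℝ (Fin (n + 1)) =>
            ENNReal.ofReal (Real.exp (((inner ℝ δ y : ℝ) - ‖δ‖ ^ 2 / 2) / v)))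
              ∘ ⇑O.symm.toHomeomorph.toMeasurableEquiv)) := by
        rw [show ⇑O.symm.toHomeomorph.toMeasurableEquiv = ⇑O.symm from rfl, htarg]
    _ = (Measure.map (⇑O.symm.toHomeomorph.toMeasurableEquiv) ν).withDensity
          (fun y => ENNReal.ofReal (Real.exp (((inner ℝ δ y : ℝ) - ‖δ‖ ^ 2 / 2) / v))) :=
        rs_map_withDensity _ _ (rs_target_meas δ)
    _ = ν.withDensity
          (fun y => ENNReal.ofReal (Real.exp (((inner ℝ δ y : ℝ) - ‖δ‖ ^ 2 / 2) / v))) := by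
        rw [show ⇑O.symm.toHomeomorph.toMeasurableEquiv = ⇑O.symm from rfl, hOsymm']

end CM

lemma rs_cdf_lt {s t : ℝ} (h : s < t) : stdNormalCDF s < stdNormalCDF t := by
  have hst : Set.Iic t = Set.Iic s ∪ Set.Ioc s t := (Set.Iic_union_Ioc_eq_Iic h.le).symm
  have hdisj : Disjoint (Set.Iic s) (Set.Ioc s t) :=
    Set.disjoint_left.2 fun y hy hy' => absurd hy (not_le.2 hy'.1)
  have hpos : gaussianReal 0 1 (Set.Ioc s t) ≠ 0 := by
    intro h0
    have habs := gaussianReal_absolutelyContinuous' 0 (v := 1) one_ne_zero h0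
    rw [Real.volume_Ioc] at habs
    exact (ENNReal.ofReal_pos.2 (by linarith)).ne' habs
  rw [stdNormalCDF, stdNormalCDF]
  rw [ENNReal.toReal_lt_toReal (measure_ne_top _ _) (measure_ne_top _ _)]
  rw [hst, measure_union hdisj measurableSet_Ioc]
  exact ENNReal.lt_add_right (measure_ne_top _ _) hpos

section Halfspace

variable {n : ℕ} {σ : ℝ}

lemma rs_inner_meas (w : EuclideanSpace ℝ (Fin (n + 1))) :
    Measurable fun y : EuclideanSpace ℝ (Fin (n + 1)) => (inner ℝ w y : ℝ) :=
  Continuous.measurable (Continuous.inner continuous_const continuous_id)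

lemma rs_toNNReal_ne (hσ : 0 < σ) : (σ ^ 2).toNNReal ≠ 0 := by
  simp only [ne_eq, Real.toNNReal_eq_zero, not_le]
  positivity

lemma rs_halfspace (hσ : 0 < σ) (w : EuclideanSpace ℝ (Fin (n + 1))) (hw : ‖w‖ = 1) (s : ℝ) :
    rsNu (n + 1) (σ ^ 2).toNNReal {y | (inner ℝ w y : ℝ) ≤ σ * s}
      = gaussianReal 0 1 (Set.Iic s) := by
  have hset : {y : EuclideanSpace ℝ (Fin (n + 1)) | (inner ℝ w y : ℝ) ≤ σ * s}
      = (fun y : EuclideanSpace ℝ (Fin (n + 1)) => (inner ℝ w y : ℝ)) ⁻¹' (Set.Iic (σ * s)) := rfl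
  rw [hset, ← Measure.map_apply (rs_inner_meas w) measurableSet_Iic,
    rsNu_inner (rs_toNNReal_ne hσ) w hw]
  have hscale := gaussianReal_map_const_mul (μ := 0) (v := 1) σ
  rw [mul_zero] at hscale
  have hvv : (⟨σ ^ 2, sq_nonneg σ⟩ : NNReal) * 1 = (σ ^ 2).toNNReal := by
    ext
    simp [Real.coe_toNNReal _ (sq_nonneg σ)]
  erw [hvv] at hscale
  rw [← hscale, Measure.map_apply (measurable_const_mul σ) measurableSet_Iic]
  congr 1
  ext t
  simp only [Set.mem_preimage, Set.mem_Iic]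
  exact mul_le_mul_iff_right₀ hσ

/-- The integral of the Cameron–Martin density over a halfspace. -/
lemma rs_integral_halfspace (hσ : 0 < σ) (δ w : EuclideanSpace ℝ (Fin (n + 1)))
    (hw : ‖w‖ = 1) (s : ℝ) :
    ∫⁻ y in {y : EuclideanSpace ℝ (Fin (n + 1)) | (inner ℝ w y : ℝ) ≤ σ * s},
        ENNReal.ofReal (Real.exp (((inner ℝ δ y : ℝ) - ‖δ‖ ^ 2 / 2) / ((σ ^ 2).toNNReal : ℝ)))
        ∂(rsNu (n + 1) (σ ^ 2).toNNReal)
      = gaussianReal 0 1 (Set.Iic (s - (inner ℝ w δ : ℝ) / σ)) := by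
  have hmeasH : MeasurableSet {y : EuclideanSpace ℝ (Fin (n + 1)) | (inner ℝ w y : ℝ) ≤ σ * s} :=
    (rs_inner_meas w) measurableSet_Iic
  rw [← withDensity_apply _ hmeasH, ← rsNu_CM (rs_toNNReal_ne hσ) δ,
    Measure.map_apply (measurable_add_const δ) hmeasH]
  have hset : (fun y : EuclideanSpace ℝ (Fin (n + 1)) => y + δ) ⁻¹'
        {y : EuclideanSpace ℝ (Fin (n + 1)) | (inner ℝ w y : ℝ) ≤ σ * s}
      = {y : EuclideanSpace ℝ (Fin (n + 1)) |
          (inner ℝ w y : ℝ) ≤ σ * (s - (inner ℝ w δ : ℝ) / σ)} := by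
    ext y
    simp only [Set.mem_preimage, Set.mem_setOf_eq, inner_add_right]
    constructor
    · intro h; rw [mul_sub]; rw [mul_div_cancel₀ _ hσ.ne']; linarith
    · intro h; rw [mul_sub, mul_div_cancel₀ _ hσ.ne'] at h; linarith
  rw [hset, rs_halfspace hσ w hw]

end Halfspace

section Bounds

variable {n : ℕ} {σ : ℝ}

lemma rs_lower (hσ : 0 < σ) (δ : EuclideanSpace ℝ (Fin (n + 1))) (hδ : δ ≠ 0)
    (S : Set (EuclideanSpace ℝ (Fin (n + 1)))) (hS : MeasurableSet S) (t : ℝ)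
    (hm : gaussianReal 0 1 (Set.Iic t) ≤ rsNu (n + 1) (σ ^ 2).toNNReal S) :
    gaussianReal 0 1 (Set.Iic (t - ‖δ‖ / σ))
      ≤ ∫⁻ y in S, ENNReal.ofReal (Real.exp (((inner ℝ δ y : ℝ) - ‖δ‖ ^ 2 / 2)
          / (((σ ^ 2).toNNReal : NNReal) : ℝ))) ∂(rsNu (n + 1) (σ ^ 2).toNNReal) := by
  have hc : (0 : ℝ) < ‖δ‖ := norm_pos_iff.2 hδ
  have hvpos : (0 : ℝ) < (((σ ^ 2).toNNReal : NNReal) : ℝ) := by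
    rw [Real.coe_toNNReal _ (sq_nonneg σ)]; positivity
  set u : EuclideanSpace ℝ (Fin (n + 1)) := ‖δ‖⁻¹ • δ with hudef
  have hu : ‖u‖ = 1 := by
    rw [hudef, norm_smul, norm_inv, Real.norm_eq_abs, abs_of_pos hc, inv_mul_cancel₀ hc.ne']
  have hδin : ∀ y : EuclideanSpace ℝ (Fin (n + 1)),
      (inner ℝ δ y : ℝ) = ‖δ‖ * (inner ℝ u y : ℝ) := by
    intro y
    rw [hudef, real_inner_smul_left, ← mul_assoc, mul_inv_cancel₀ hc.ne', one_mul]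
  have huδ : (inner ℝ u δ : ℝ) = ‖δ‖ := by
    rw [hudef, real_inner_smul_left, real_inner_self_eq_norm_sq, sq, ← mul_assoc,
      inv_mul_cancel₀ hc.ne', one_mul]
  have hHmeas : MeasurableSet {y : EuclideanSpace ℝ (Fin (n + 1)) | (inner ℝ u y : ℝ) ≤ σ * t} :=
    (rs_inner_meas u) measurableSet_Iic
  have hmm : rsNu (n + 1) (σ ^ 2).toNNReal {y | (inner ℝ u y : ℝ) ≤ σ * t}
      ≤ rsNu (n + 1) (σ ^ 2).toNNReal S := by
    rw [rs_halfspace hσ u hu t]; exact hm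
  have hnp := rs_np_ge (rsNu (n + 1) (σ ^ 2).toNNReal) (rs_target_meas δ)
    (ENNReal.ofReal (Real.exp ((‖δ‖ * (σ * t) - ‖δ‖ ^ 2 / 2)
      / (((σ ^ 2).toNNReal : NNReal) : ℝ)))) hS hHmeas
    (fun y hy => by
      apply ENNReal.ofReal_le_ofReal
      apply Real.exp_le_exp.2
      gcongr
      rw [hδin y]
      exact mul_le_mul_of_nonneg_left hy (norm_nonneg δ))
    (fun y hy => by
      apply ENNReal.ofReal_le_ofReal
      apply Real.exp_le_exp.2
      gcongr
      rw [hδin y]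
      exact mul_le_mul_of_nonneg_left (le_of_not_ge hy) (norm_nonneg δ))
    hmm
  calc gaussianReal 0 1 (Set.Iic (t - ‖δ‖ / σ))
      = gaussianReal 0 1 (Set.Iic (t - (inner ℝ u δ : ℝ) / σ)) := by rw [huδ]
    _ = ∫⁻ y in {y : EuclideanSpace ℝ (Fin (n + 1)) | (inner ℝ u y : ℝ) ≤ σ * t},
          ENNReal.ofReal (Real.exp (((inner ℝ δ y : ℝ) - ‖δ‖ ^ 2 / 2)
            / (((σ ^ 2).toNNReal : NNReal) : ℝ))) ∂(rsNu (n + 1) (σ ^ 2).toNNReal) :=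
        (rs_integral_halfspace hσ δ u hu t).symm
    _ ≤ _ := hnp

lemma rs_upper (hσ : 0 < σ) (δ : EuclideanSpace ℝ (Fin (n + 1))) (hδ : δ ≠ 0)
    (S : Set (EuclideanSpace ℝ (Fin (n + 1)))) (hS : MeasurableSet S) (t : ℝ)
    (hm : rsNu (n + 1) (σ ^ 2).toNNReal S ≤ gaussianReal 0 1 (Set.Iic t)) :
    ∫⁻ y in S, ENNReal.ofReal (Real.exp (((inner ℝ δ y : ℝ) - ‖δ‖ ^ 2 / 2)
          / (((σ ^ 2).toNNReal : NNReal) : ℝ))) ∂(rsNu (n + 1) (σ ^ 2).toNNReal)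
      ≤ gaussianReal 0 1 (Set.Iic (t + ‖δ‖ / σ)) := by
  have hc : (0 : ℝ) < ‖δ‖ := norm_pos_iff.2 hδ
  have hvpos : (0 : ℝ) < (((σ ^ 2).toNNReal : NNReal) : ℝ) := by
    rw [Real.coe_toNNReal _ (sq_nonneg σ)]; positivity
  set u : EuclideanSpace ℝ (Fin (n + 1)) := ‖δ‖⁻¹ • δ with hudef
  have hu : ‖u‖ = 1 := by
    rw [hudef, norm_smul, norm_inv, Real.norm_eq_abs, abs_of_pos hc, inv_mul_cancel₀ hc.ne']
  have hw : ‖-u‖ = 1 := by rw [norm_neg]; exact hu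
  have hδin : ∀ y : EuclideanSpace ℝ (Fin (n + 1)),
      (inner ℝ δ y : ℝ) = -(‖δ‖ * (inner ℝ (-u) y : ℝ)) := by
    intro y
    rw [inner_neg_left, hudef, real_inner_smul_left, mul_neg, neg_neg, ← mul_assoc,
      mul_inv_cancel₀ hc.ne', one_mul]
  have hwδ : (inner ℝ (-u) δ : ℝ) = -‖δ‖ := by
    rw [inner_neg_left, hudef, real_inner_smul_left, real_inner_self_eq_norm_sq, sq, ← mul_assoc,
      inv_mul_cancel₀ hc.ne', one_mul]
  have hHmeas : MeasurableSet {y : EuclideanSpace ℝ (Fin (n + 1)) | (inner ℝ (-u) y : ℝ) ≤ σ * t} :=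
    (rs_inner_meas (-u)) measurableSet_Iic
  have hmm : rsNu (n + 1) (σ ^ 2).toNNReal S
      ≤ rsNu (n + 1) (σ ^ 2).toNNReal {y | (inner ℝ (-u) y : ℝ) ≤ σ * t} := by
    rw [rs_halfspace hσ (-u) hw t]; exact hm
  have hnp := rs_np_le (rsNu (n + 1) (σ ^ 2).toNNReal) (rs_target_meas δ)
    (ENNReal.ofReal (Real.exp ((-(‖δ‖ * (σ * t)) - ‖δ‖ ^ 2 / 2)
      / (((σ ^ 2).toNNReal : NNReal) : ℝ)))) hS hHmeas
    (fun y hy => by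
      apply ENNReal.ofReal_le_ofReal
      apply Real.exp_le_exp.2
      gcongr
      rw [hδin y]
      exact neg_le_neg (mul_le_mul_of_nonneg_left hy (norm_nonneg δ)))
    (fun y hy => by
      apply ENNReal.ofReal_le_ofReal
      apply Real.exp_le_exp.2
      gcongr
      rw [hδin y]
      exact neg_le_neg (mul_le_mul_of_nonneg_left (le_of_not_ge hy) (norm_nonneg δ)))
    hmm
  calc ∫⁻ y in S, ENNReal.ofReal (Real.exp (((inner ℝ δ y : ℝ) - ‖δ‖ ^ 2 / 2)
          / (((σ ^ 2).toNNReal : NNReal) : ℝ))) ∂(rsNu (n + 1) (σ ^ 2).toNNReal)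
      ≤ ∫⁻ y in {y : EuclideanSpace ℝ (Fin (n + 1)) | (inner ℝ (-u) y : ℝ) ≤ σ * t},
          ENNReal.ofReal (Real.exp (((inner ℝ δ y : ℝ) - ‖δ‖ ^ 2 / 2)
            / (((σ ^ 2).toNNReal : NNReal) : ℝ))) ∂(rsNu (n + 1) (σ ^ 2).toNNReal) := hnp
    _ = gaussianReal 0 1 (Set.Iic (t - (inner ℝ (-u) δ : ℝ) / σ)) :=
        rs_integral_halfspace hσ δ (-u) hw t
    _ = gaussianReal 0 1 (Set.Iic (t + ‖δ‖ / σ)) := by rw [hwδ]; ring_nf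

end Bounds

end RSAux

section RSMain
open MeasureTheory ProbabilityTheory Real Set ENNReal

/-- L₂ certified robustness of randomized smoothing (Cohen et al., 2019):
if `p_f(x, A) ≥ Φ(a)` and `p_f(x, B) ≤ Φ(b)` for all `B ≠ A` with `a ≥ b`, then for every
`δ` with `‖δ‖₂ < σ(a − b)/2` the smoothed classifier still returns `A` at `x + δ`,
i.e. `p_f(x + δ, A) > p_f(x + δ, B)` for every `B ≠ A`. -/
theorem randomized_smoothing_certified_robustness
    (d : ℕ) (hd : 1 ≤ d) (σ : ℝ) (hσ : 0 < σ)
    {𝒜 : Type*} [Fintype 𝒜] [Nonempty 𝒜]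
    (f : EuclideanSpace ℝ (Fin d) → 𝒜)
    (hf : ∀ A : 𝒜, MeasurableSet (f ⁻¹' {A}))
    (x : EuclideanSpace ℝ (Fin d)) (A : 𝒜) (a b : ℝ) (hab : b ≤ a)
    (hA : stdNormalCDF a ≤ classProb d σ f x A)
    (hB : ∀ B : 𝒜, B ≠ A → classProb d σ f x B ≤ stdNormalCDF b) :
    ∀ δ : EuclideanSpace ℝ (Fin d), ‖δ‖ < σ * (a - b) / 2 →
      ∀ B : 𝒜, B ≠ A → classProb d σ f (x + δ) B < classProb d σ f (x + δ) A := by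
  obtain ⟨n, rfl⟩ : ∃ n, d = n + 1 := ⟨d - 1, (Nat.succ_pred_eq_of_pos hd).symm⟩
  intro δ hδnorm B hBA
  have hv : ((σ ^ 2).toNNReal : NNReal) ≠ 0 := rs_toNNReal_ne hσ
  have hclass : ∀ (y : EuclideanSpace ℝ (Fin (n + 1))) (C : 𝒜),
      classProb (n + 1) σ f y C
        = (rsNu (n + 1) (σ ^ 2).toNNReal ((fun η => y + η) ⁻¹' (f ⁻¹' {C}))).toReal := by
    intro y C
    have h1 : isoGaussian (n + 1) σ y
        = Measure.map (fun η => y + η) (rsNu (n + 1) (σ ^ 2).toNNReal) := rfl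
    rw [classProb, h1, Measure.map_apply (measurable_const_add y) (hf C)]
  by_cases hδ0 : δ = 0
  · subst hδ0
    rw [norm_zero] at hδnorm
    have hba : b < a := by nlinarith
    have h1 : x + 0 = x := add_zero x
    rw [h1]
    calc classProb (n + 1) σ f x B ≤ stdNormalCDF b := hB B hBA
      _ < stdNormalCDF a := rs_cdf_lt hba
      _ ≤ classProb (n + 1) σ f x A := hA
  -- main case
  have hshift : ∀ C : 𝒜,
      rsNu (n + 1) (σ ^ 2).toNNReal ((fun η => (x + δ) + η) ⁻¹' (f ⁻¹' {C}))
        = ∫⁻ y in (fun η => x + η) ⁻¹' (f ⁻¹' {C}),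
            ENNReal.ofReal (Real.exp (((inner ℝ δ y : ℝ) - ‖δ‖ ^ 2 / 2)
              / (((σ ^ 2).toNNReal : NNReal) : ℝ))) ∂(rsNu (n + 1) (σ ^ 2).toNNReal) := by
    intro C
    have hsets : (fun η : EuclideanSpace ℝ (Fin (n + 1)) => (x + δ) + η) ⁻¹' (f ⁻¹' {C})
        = (fun η : EuclideanSpace ℝ (Fin (n + 1)) => η + δ) ⁻¹'
            ((fun η => x + η) ⁻¹' (f ⁻¹' {C})) := by
      ext η
      simp only [Set.mem_preimage]
      have : x + (η + δ) = (x + δ) + η := by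
        rw [add_assoc, add_comm δ η]
      rw [this]
    rw [hsets, ← Measure.map_apply (measurable_add_const δ)
        ((measurable_const_add x) (hf C)), rsNu_CM hv δ,
      withDensity_apply _ ((measurable_const_add x) (hf C))]
  -- finiteness
  have htot : ∫⁻ y, ENNReal.ofReal (Real.exp (((inner ℝ δ y : ℝ) - ‖δ‖ ^ 2 / 2)
      / (((σ ^ 2).toNNReal : NNReal) : ℝ))) ∂(rsNu (n + 1) (σ ^ 2).toNNReal) = 1 := by
    have h1 : ((rsNu (n + 1) (σ ^ 2).toNNReal).withDensity
        (fun y => ENNReal.ofReal (Real.exp (((inner ℝ δ y : ℝ) - ‖δ‖ ^ 2 / 2)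
          / (((σ ^ 2).toNNReal : NNReal) : ℝ))))) Set.univ = 1 := by
      rw [← rsNu_CM hv δ, Measure.map_apply (measurable_add_const δ) MeasurableSet.univ]
      simp
    rw [← h1, withDensity_apply _ MeasurableSet.univ, Measure.restrict_univ]
  have hfin : ∀ C : 𝒜, ∫⁻ y in (fun η => x + η) ⁻¹' (f ⁻¹' {C}),
      ENNReal.ofReal (Real.exp (((inner ℝ δ y : ℝ) - ‖δ‖ ^ 2 / 2)
        / (((σ ^ 2).toNNReal : NNReal) : ℝ))) ∂(rsNu (n + 1) (σ ^ 2).toNNReal) ≠ ⊤ := by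
    intro C
    refine ne_top_of_le_ne_top ?_ (setLIntegral_le_lintegral _ _)
    rw [htot]
    exact one_ne_top
  -- measure inequalities at x
  have hmA : gaussianReal 0 1 (Set.Iic a)
      ≤ rsNu (n + 1) (σ ^ 2).toNNReal ((fun η => x + η) ⁻¹' (f ⁻¹' {A})) := by
    rw [← ENNReal.toReal_le_toReal (measure_ne_top _ _) (measure_ne_top _ _)]
    rw [← hclass x A]
    exact hA
  have hmB : rsNu (n + 1) (σ ^ 2).toNNReal ((fun η => x + η) ⁻¹' (f ⁻¹' {B}))
      ≤ gaussianReal 0 1 (Set.Iic b) := by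
    rw [← ENNReal.toReal_le_toReal (measure_ne_top _ _) (measure_ne_top _ _)]
    rw [← hclass x B]
    exact hB B hBA
  have hlow := rs_lower hσ δ hδ0 _ ((measurable_const_add x) (hf A)) a hmA
  have hup := rs_upper hσ δ hδ0 _ ((measurable_const_add x) (hf B)) b hmB
  have hstrict : b + ‖δ‖ / σ < a - ‖δ‖ / σ := by
    have h1 : ‖δ‖ / σ < (a - b) / 2 := by
      rw [div_lt_div_iff₀ hσ (by norm_num : (0:ℝ) < 2)]
      nlinarith
    linarith
  calc classProb (n + 1) σ f (x + δ) B
      = (rsNu (n + 1) (σ ^ 2).toNNReal ((fun η => (x + δ) + η) ⁻¹' (f ⁻¹' {B}))).toReal :=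
        hclass (x + δ) B
    _ = (∫⁻ y in (fun η => x + η) ⁻¹' (f ⁻¹' {B}),
          ENNReal.ofReal (Real.exp (((inner ℝ δ y : ℝ) - ‖δ‖ ^ 2 / 2)
            / (((σ ^ 2).toNNReal : NNReal) : ℝ))) ∂(rsNu (n + 1) (σ ^ 2).toNNReal)).toReal := by
        rw [hshift B]
    _ ≤ stdNormalCDF (b + ‖δ‖ / σ) := ENNReal.toReal_mono (measure_ne_top _ _) hup
    _ < stdNormalCDF (a - ‖δ‖ / σ) := rs_cdf_lt hstrict
    _ ≤ (∫⁻ y in (fun η => x + η) ⁻¹' (f ⁻¹' {A}),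
          ENNReal.ofReal (Real.exp (((inner ℝ δ y : ℝ) - ‖δ‖ ^ 2 / 2)
            / (((σ ^ 2).toNNReal : NNReal) : ℝ))) ∂(rsNu (n + 1) (σ ^ 2).toNNReal)).toReal :=
        ENNReal.toReal_mono (hfin A) hlow
    _ = (rsNu (n + 1) (σ ^ 2).toNNReal ((fun η => (x + δ) + η) ⁻¹' (f ⁻¹' {A}))).toReal := by
        rw [hshift A]
    _ = classProb (n + 1) σ f (x + δ) A := (hclass (x + δ) A).symm

end RSMain
end

section
/- For every measurable set S ⊆ ℝ^d, every x, δ ∈ ℝ^d, and every a ∈ ℝ: if μ_x(S) ≥ Φ(a), then μ_{x+δ}(S) ≥ Φ(a − ‖δ‖₂/σ). (Gaussian Neyman–Pearson shift lower bound: among all sets of a given Gaussian measure, the half-space orthogonal to the shift direction minimizes the measure under the shifted Gaussian.) -/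
open MeasureTheory ProbabilityTheory

open Real
open scoped ENNReal NNReal

namespace GaussNP


variable {α β : Type*} [MeasurableSpace α] [MeasurableSpace β]

lemma map_withDensity_equiv (e : α ≃ᵐ β) (μ : Measure α) {g : β → ℝ≥0∞} (hg : Measurable g) :
    Measure.map e (μ.withDensity (g ∘ e)) = (Measure.map e μ).withDensity g := by
  ext s hs
  rw [Measure.map_apply e.measurable hs, withDensity_apply _ hs,
    withDensity_apply _ (e.measurable hs), setLIntegral_map hs hg e.measurable]
  rfl

lemma np_lemma (μ : Measure α) [IsFiniteMeasure μ] {g : α → ℝ≥0∞} (hg : Measurable g)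
    (k : ℝ≥0∞) {S H : Set α} (hSm : MeasurableSet S) (hHm : MeasurableSet H)
    (h1 : ∀ y ∈ H, g y ≤ k) (h2 : ∀ y ∉ H, k ≤ g y) (hle : μ H ≤ μ S) :
    μ.withDensity g H ≤ μ.withDensity g S := by
  have key : μ (H \ S) ≤ μ (S \ H) := by
    have e1 : μ (H ∩ S) + μ (H \ S) = μ H := measure_inter_add_diff H hSm
    have e2 : μ (S ∩ H) + μ (S \ H) = μ S := measure_inter_add_diff S hHm
    rw [Set.inter_comm] at e2
    have : μ (H ∩ S) + μ (H \ S) ≤ μ (H ∩ S) + μ (S \ H) := by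
      rw [e1, e2]; exact hle
    exact (ENNReal.add_le_add_iff_left (measure_ne_top μ _)).mp this
  have hdiff : μ.withDensity g (H \ S) ≤ μ.withDensity g (S \ H) := by
    rw [withDensity_apply _ (hHm.diff hSm), withDensity_apply _ (hSm.diff hHm)]
    calc ∫⁻ y in H \ S, g y ∂μ ≤ ∫⁻ _ in H \ S, k ∂μ :=
          setLIntegral_mono measurable_const fun y hy => h1 y hy.1
      _ = k * μ (H \ S) := setLIntegral_const _ _
      _ ≤ k * μ (S \ H) := mul_le_mul_right key _
      _ = ∫⁻ _ in S \ H, k ∂μ := (setLIntegral_const _ _).symm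
      _ ≤ ∫⁻ y in S \ H, g y ∂μ := setLIntegral_mono hg fun y hy => h2 y hy.2
  calc μ.withDensity g H
      = μ.withDensity g (H ∩ S) + μ.withDensity g (H \ S) :=
        (measure_inter_add_diff H hSm).symm
    _ ≤ μ.withDensity g (H ∩ S) + μ.withDensity g (S \ H) := add_le_add_right hdiff _
    _ = μ.withDensity g (S ∩ H) + μ.withDensity g (S \ H) := by rw [Set.inter_comm]
    _ = μ.withDensity g S := measure_inter_add_diff S hHm

lemma withDensity_prod (μ : Measure α) (κ : Measure β) [SigmaFinite μ] [SigmaFinite κ]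
    {f : α → ℝ≥0∞} {g : β → ℝ≥0∞} (hf : Measurable f) (hg : Measurable g)
    [SigmaFinite (μ.withDensity f)] [SigmaFinite (κ.withDensity g)] :
    (μ.prod κ).withDensity (fun p => f p.1 * g p.2)
      = (μ.withDensity f).prod (κ.withDensity g) := by
  refine (Measure.prod_eq (μ := μ.withDensity f) (ν := κ.withDensity g) fun s t hs ht => ?_).symm
  rw [withDensity_apply _ (hs.prod ht), ← Measure.prod_restrict,
    lintegral_prod_mul hf.aemeasurable hg.aemeasurable,
    ← withDensity_apply _ hs, ← withDensity_apply _ ht]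

lemma pi_withDensity : ∀ (n : ℕ) (ν : Fin n → Measure α) (f : Fin n → α → ℝ≥0∞),
    (∀ i, SigmaFinite (ν i)) → (∀ i, Measurable (f i)) →
    (∀ i, SigmaFinite ((ν i).withDensity (f i))) →
    Measure.pi (fun i => (ν i).withDensity (f i))
      = (Measure.pi ν).withDensity (fun y => ∏ i, f i (y i)) := by
  intro n
  induction n with
  | zero =>
      intro ν f hν hf hνf
      have hfam : (fun i => (ν i).withDensity (f i)) = ν := funext fun i => i.elim0
      have hone : (fun y : Fin 0 → α => ∏ i, f i (y i)) = fun _ => (1 : ℝ≥0∞) := by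
        funext y; simp
      rw [hfam, hone]
      exact withDensity_one.symm
  | succ n ih =>
      intro ν f hν hf hνf
      haveI : ∀ i, SigmaFinite (ν i) := hν
      haveI : ∀ i, SigmaFinite ((ν i).withDensity (f i)) := hνf
      have ihr := ih (fun j => ν (Fin.succAbove 0 j)) (fun j => f (Fin.succAbove 0 j))
        (fun j => hν _) (fun j => hf _) (fun j => hνf _)
      let e := MeasurableEquiv.piFinSuccAbove (fun _ : Fin (n+1) => α) 0
      have mp1 := (measurePreserving_piFinSuccAbove (fun i => (ν i).withDensity (f i)) 0).symm e
      have mp2 := (measurePreserving_piFinSuccAbove ν 0).symm e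
      have hgrest : Measurable (fun z : Fin n → α => ∏ j, f (Fin.succAbove 0 j) (z j)) :=
        Finset.measurable_prod _ fun j _ => (hf _).comp (measurable_pi_apply j)
      have hGmeas : Measurable (fun y : Fin (n+1) → α => ∏ i, f i (y i)) :=
        Finset.measurable_prod _ fun i _ => (hf i).comp (measurable_pi_apply i)
      have h0 : ∀ p : α × (Fin n → α), (e.symm p) 0 = p.1 := fun p => by
        simp [e, MeasurableEquiv.piFinSuccAbove_symm_apply, Fin.insertNthEquiv,
          Fin.insertNth_apply_same]
      have hsa : ∀ (p : α × (Fin n → α)) (j : Fin n),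
          (e.symm p) (Fin.succAbove 0 j) = p.2 j := fun p j => by
        simp [e, MeasurableEquiv.piFinSuccAbove_symm_apply, Fin.insertNthEquiv,
          Fin.insertNth_apply_succAbove]
      have hGF : ((fun y : Fin (n+1) → α => ∏ i, f i (y i)) ∘ ⇑e.symm)
          = fun p : α × (Fin n → α) => f 0 p.1 * ∏ j, f (Fin.succAbove 0 j) (p.2 j) := by
        funext p
        simp only [Function.comp_apply]
        rw [Fin.prod_univ_succAbove (fun i => f i (e.symm p i)) 0, h0 p]
        refine congrArg (fun t => f 0 p.1 * t) ?_
        exact Finset.prod_congr rfl fun j _ => by rw [hsa p j]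
      haveI : SigmaFinite ((Measure.pi fun j => ν (Fin.succAbove 0 j)).withDensity
          fun z => ∏ j, f (Fin.succAbove 0 j) (z j)) := by rw [← ihr]; infer_instance
      calc Measure.pi (fun i => (ν i).withDensity (f i))
          = Measure.map e.symm (((ν 0).withDensity (f 0)).prod
              (Measure.pi fun j => (ν (Fin.succAbove 0 j)).withDensity (f (Fin.succAbove 0 j)))) :=
            mp1.map_eq.symm
        _ = Measure.map e.symm (((ν 0).withDensity (f 0)).prod
              ((Measure.pi fun j => ν (Fin.succAbove 0 j)).withDensity
                fun z => ∏ j, f (Fin.succAbove 0 j) (z j))) := by rw [ihr]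
        _ = Measure.map e.symm
              (((ν 0).prod (Measure.pi fun j => ν (Fin.succAbove 0 j))).withDensity
              ((fun y : Fin (n+1) → α => ∏ i, f i (y i)) ∘ ⇑e.symm)) := by
            rw [hGF]
            exact congrArg _ (withDensity_prod _ _ (hf 0) hgrest).symm
        _ = (Measure.map e.symm
              ((ν 0).prod (Measure.pi fun j => ν (Fin.succAbove 0 j)))).withDensity
              (fun y => ∏ i, f i (y i)) := map_withDensity_equiv _ _ hGmeas
        _ = (Measure.pi ν).withDensity (fun y => ∏ i, f i (y i)) := by rw [mp2.map_eq]



lemma var_coe {σ : ℝ} (hσ : 0 < σ) : (((σ^2).toNNReal : ℝ≥0) : ℝ) = σ^2 :=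
  Real.coe_toNNReal _ (sq_nonneg σ)

lemma var_ne_zero {σ : ℝ} (hσ : 0 < σ) : (σ^2).toNNReal ≠ 0 := by
  intro h
  have := var_coe hσ
  rw [h] at this
  simp at this
  nlinarith

lemma gauss_eq_map {σ : ℝ} (hσ : 0 < σ) :
    gaussianReal 0 (σ^2).toNNReal = (gaussianReal 0 1).map (σ * ·) := by
  rw [gaussianReal_map_const_mul σ]
  rw [mul_zero]
  congr 1
  ext
  simp [var_coe hσ]

lemma gauss_Iic {σ : ℝ} (hσ : 0 < σ) (t : ℝ) :
    gaussianReal 0 (σ^2).toNNReal (Set.Iic t) = gaussianReal 0 1 (Set.Iic (t / σ)) := by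
  rw [gauss_eq_map hσ, Measure.map_apply (measurable_const_mul σ) measurableSet_Iic]
  congr 1
  ext z
  simp only [Set.mem_preimage, Set.mem_Iic]
  exact (le_div_iff₀' hσ).symm

lemma gauss_shift_density {σ : ℝ} (hσ : 0 < σ) (c : ℝ) :
    (gaussianReal 0 (σ^2).toNNReal).map (c + ·)
      = (gaussianReal 0 (σ^2).toNNReal).withDensity
        (fun t => ENNReal.ofReal (rexp (c * t / σ^2 - c^2 / (2 * σ^2)))) := by
  have hv : (σ^2).toNNReal ≠ 0 := var_ne_zero hσ
  rw [gaussianReal_map_const_add c, zero_add]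
  rw [gaussianReal_of_var_ne_zero c hv, gaussianReal_of_var_ne_zero 0 hv]
  have hR : Measurable fun t : ℝ => ENNReal.ofReal (rexp (c * t / σ^2 - c^2 / (2 * σ^2))) :=
    ((((measurable_id'.const_mul c).div_const _).sub_const _).exp).ennreal_ofReal
  rw [← withDensity_mul _ (measurable_gaussianPDF 0 _) hR]
  congr 1
  funext t
  simp only [Pi.mul_apply, gaussianPDF]
  rw [← ENNReal.ofReal_mul (gaussianPDFReal_nonneg _ _ _)]
  congr 1
  simp only [gaussianPDFReal, sub_zero]
  rw [var_coe hσ]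
  have hkey : -(t - c)^2/(2*σ^2) = -t^2/(2*σ^2) + (c*t/σ^2 - c^2/(2*σ^2)) := by
    have hσ2 : σ^2 ≠ 0 := by positivity
    field_simp
    ring
  rw [hkey, Real.exp_add]
  ring

lemma map_eval_pi {n : ℕ} (μ : Measure ℝ) [IsProbabilityMeasure μ] :
    Measure.map (fun y : Fin (n+1) → ℝ => y 0) (Measure.pi fun _ => μ) = μ := by
  have mp := measurePreserving_piFinSuccAbove (fun _ : Fin (n+1) => μ) 0
  have hcomp : (fun y : Fin (n+1) → ℝ => y 0)
      = Prod.fst ∘ ⇑(MeasurableEquiv.piFinSuccAbove (fun _ : Fin (n+1) => ℝ) 0) := by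
    funext y
    simp [MeasurableEquiv.piFinSuccAbove_apply]
  rw [hcomp, ← Measure.map_map measurable_fst (MeasurableEquiv.measurable _), mp.map_eq,
    Measure.map_fst_prod]
  simp

lemma map_shift_pi {n : ℕ} {σ : ℝ} (hσ : 0 < σ) (c : ℝ) :
    Measure.map (fun y : Fin (n+1) → ℝ => Pi.single (0 : Fin (n+1)) c + y)
      (Measure.pi fun _ => gaussianReal 0 (σ^2).toNNReal)
      = (Measure.pi fun _ : Fin (n+1) => gaussianReal 0 (σ^2).toNNReal).withDensity
        (fun y => ENNReal.ofReal (rexp (c * y 0 / σ^2 - c^2 / (2*σ^2)))) := by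
  set γ := gaussianReal 0 (σ^2).toNNReal with hγ
  set R : ℝ → ℝ≥0∞ := fun t => ENNReal.ofReal (rexp (c * t / σ^2 - c^2 / (2*σ^2))) with hRdef
  have hRmeas : Measurable R :=
    ((((measurable_id'.const_mul c).div_const _).sub_const _).exp).ennreal_ofReal
  let e := MeasurableEquiv.piFinSuccAbove (fun _ : Fin (n+1) => ℝ) 0
  have mp := (measurePreserving_piFinSuccAbove (fun _ : Fin (n+1) => γ) 0).symm e
  set κ := (Measure.pi fun _ : Fin n => γ) with hκ
  have hshift : Measurable (fun y : Fin (n+1) → ℝ => Pi.single (0 : Fin (n+1)) c + y) :=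
    measurable_pi_lambda _ fun j => (measurable_pi_apply j).const_add _
  have h0 : ∀ p : ℝ × (Fin n → ℝ), (e.symm p) 0 = p.1 := fun p => by
    simp [e, MeasurableEquiv.piFinSuccAbove_symm_apply, Fin.insertNthEquiv,
      Fin.insertNth_apply_same]
  have hsucc : ∀ (p : ℝ × (Fin n → ℝ)) (i : Fin n), (e.symm p) i.succ = p.2 i := fun p i => by
    have h1 : (0 : Fin (n+1)).succAbove i = i.succ := congr_fun Fin.succAbove_zero i
    have h2 : (e.symm p) ((0 : Fin (n+1)).succAbove i) = p.2 i := by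
      simp [e, MeasurableEquiv.piFinSuccAbove_symm_apply, Fin.insertNthEquiv,
        Fin.insertNth_apply_succAbove]
    rwa [h1] at h2
  have hconj : (fun y : Fin (n+1) → ℝ => Pi.single (0 : Fin (n+1)) c + y) ∘ ⇑e.symm
      = ⇑e.symm ∘ (Prod.map (fun t : ℝ => c + t) id) := by
    funext p
    simp only [Function.comp_apply]
    funext j
    induction j using Fin.cases with
    | zero => simp [h0, Prod.map, Pi.single_eq_same]
    | succ i => simp [hsucc, Prod.map, Fin.succ_ne_zero, Pi.single_eq_of_ne]
  have hprodmap : Measurable (Prod.map (fun t : ℝ => c + t) (id : (Fin n → ℝ) → _)) :=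
    (measurable_id'.const_add c).prodMap measurable_id
  haveI : IsProbabilityMeasure (γ.withDensity R) := by
    rw [hRdef, ← gauss_shift_density hσ c, gaussianReal_map_const_add c]
    infer_instance
  have hgmeas : Measurable (fun y : Fin (n+1) → ℝ => R (y 0)) :=
    hRmeas.comp (measurable_pi_apply 0)
  have hgcomp : ((fun y : Fin (n+1) → ℝ => R (y 0)) ∘ ⇑e.symm)
      = fun p : ℝ × (Fin n → ℝ) => R p.1 * (fun _ : Fin n → ℝ => (1:ℝ≥0∞)) p.2 := by
    funext p
    simp [h0]
  calc Measure.map (fun y : Fin (n+1) → ℝ => Pi.single (0 : Fin (n+1)) c + y)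
        (Measure.pi fun _ : Fin (n+1) => γ)
      = Measure.map (fun y : Fin (n+1) → ℝ => Pi.single (0 : Fin (n+1)) c + y)
          (Measure.map e.symm (γ.prod κ)) := by rw [mp.map_eq]
    _ = Measure.map ((fun y : Fin (n+1) → ℝ => Pi.single (0 : Fin (n+1)) c + y) ∘ ⇑e.symm)
          (γ.prod κ) := Measure.map_map hshift e.symm.measurable
    _ = Measure.map (⇑e.symm ∘ Prod.map (fun t : ℝ => c + t) id) (γ.prod κ) := by rw [hconj]
    _ = Measure.map e.symm (Measure.map (Prod.map (fun t : ℝ => c + t) id) (γ.prod κ)) :=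
          (Measure.map_map e.symm.measurable hprodmap).symm
    _ = Measure.map e.symm ((γ.map (fun t : ℝ => c + t)).prod (κ.map id)) := by
          rw [Measure.map_prod_map _ _ (measurable_id'.const_add c) measurable_id]
    _ = Measure.map e.symm ((γ.withDensity R).prod κ) := by
          rw [Measure.map_id, gauss_shift_density hσ c]
    _ = Measure.map e.symm ((γ.prod κ).withDensity
          (fun p => R p.1 * (fun _ : Fin n → ℝ => (1:ℝ≥0∞)) p.2)) := by
          have hκone : κ.withDensity (fun _ : Fin n → ℝ => (1:ℝ≥0∞)) = κ := withDensity_one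
          haveI : SigmaFinite (κ.withDensity fun _ : Fin n → ℝ => (1:ℝ≥0∞)) := by
            rw [hκone]; infer_instance
          refine congrArg _ ?_
          rw [withDensity_prod γ κ hRmeas measurable_const, hκone]
    _ = Measure.map e.symm ((γ.prod κ).withDensity
          ((fun y : Fin (n+1) → ℝ => R (y 0)) ∘ ⇑e.symm)) := by rw [hgcomp]
    _ = (Measure.map e.symm (γ.prod κ)).withDensity (fun y => R (y 0)) :=
          map_withDensity_equiv _ _ hgmeas
    _ = (Measure.pi fun _ : Fin (n+1) => γ).withDensity (fun y => R (y 0)) := by rw [mp.map_eq]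

lemma eucl_sum_sq {d : ℕ} (z : EuclideanSpace ℝ (Fin d)) : ∑ i, z i ^ 2 = ‖z‖ ^ 2 := by
  have h := EuclideanSpace.norm_eq z
  rw [h, Real.sq_sqrt (by positivity)]
  exact Finset.sum_congr rfl fun i _ => by rw [Real.norm_eq_abs, sq_abs]

lemma D_eq_norm {d : ℕ} {σ : ℝ} (hσ : 0 < σ) (z : EuclideanSpace ℝ (Fin d)) :
    (∏ i, gaussianPDF 0 (σ^2).toNNReal (z i))
      = ENNReal.ofReal ((√(2 * π * σ^2))⁻¹ ^ d * rexp (-‖z‖^2 / (2 * σ^2))) := by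
  have hnn : ∀ i : Fin d, 0 ≤ gaussianPDFReal 0 (σ^2).toNNReal (z i) :=
    fun i => gaussianPDFReal_nonneg _ _ _
  have : (∏ i, gaussianPDF 0 (σ^2).toNNReal (z i))
      = ENNReal.ofReal (∏ i, gaussianPDFReal 0 (σ^2).toNNReal (z i)) := by
    simp only [gaussianPDF]
    exact (ENNReal.ofReal_prod_of_nonneg fun i _ => hnn i).symm
  rw [this]
  congr 1
  simp only [gaussianPDFReal, sub_zero, var_coe hσ]
  rw [Finset.prod_mul_distrib, Finset.prod_const, ← Real.exp_sum]
  congr 2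
  · simp [Finset.card_univ]
  · rw [← eucl_sum_sq z, ← Finset.sum_div, Finset.sum_neg_distrib]

lemma rot_invariant {d : ℕ} {σ : ℝ} (hσ : 0 < σ)
    (f : EuclideanSpace ℝ (Fin d) ≃ₗᵢ[ℝ] EuclideanSpace ℝ (Fin d)) :
    Measure.map f (Measure.map (MeasurableEquiv.toLp 2 (Fin d → ℝ))
      (Measure.pi fun _ : Fin d => gaussianReal 0 (σ^2).toNNReal))
    = Measure.map (MeasurableEquiv.toLp 2 (Fin d → ℝ))
      (Measure.pi fun _ : Fin d => gaussianReal 0 (σ^2).toNNReal) := by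
  have hv : (σ^2).toNNReal ≠ 0 := var_ne_zero hσ
  set D : EuclideanSpace ℝ (Fin d) → ℝ≥0∞ :=
    fun z => ∏ i, gaussianPDF 0 (σ^2).toNNReal (z i) with hDdef
  have hzi : ∀ i : Fin d, Measurable (fun z : EuclideanSpace ℝ (Fin d) => z i) :=
    fun i => (measurable_pi_apply i).comp (WithLp.measurable_ofLp 2 _)
  have hDmeas : Measurable D :=
    Finset.measurable_prod _ fun i _ => (measurable_gaussianPDF _ _).comp (hzi i)
  haveI : SigmaFinite ((volume : Measure ℝ).withDensity (gaussianPDF 0 (σ^2).toNNReal)) := by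
    rw [← gaussianReal_of_var_ne_zero 0 hv]; infer_instance
  have hpiwd : (Measure.pi fun _ : Fin d => gaussianReal 0 (σ^2).toNNReal)
      = (volume : Measure (Fin d → ℝ)).withDensity
        (fun y => ∏ i, gaussianPDF 0 (σ^2).toNNReal (y i)) := by
    rw [volume_pi]
    rw [← pi_withDensity d (fun _ => (volume : Measure ℝ))
      (fun _ => gaussianPDF 0 (σ^2).toNNReal) (fun _ => inferInstance)
      (fun _ => measurable_gaussianPDF _ _) (fun _ => inferInstance)]
    congr 1
    funext i
    rw [← gaussianReal_of_var_ne_zero 0 hv]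
  have hDcomp : (fun y : Fin d → ℝ => ∏ i, gaussianPDF 0 (σ^2).toNNReal (y i))
      = D ∘ ⇑(MeasurableEquiv.toLp 2 (Fin d → ℝ)) := by
    funext y
    simp only [Function.comp_apply, hDdef]
    rfl
  have hν0 : Measure.map (MeasurableEquiv.toLp 2 (Fin d → ℝ))
      (Measure.pi fun _ : Fin d => gaussianReal 0 (σ^2).toNNReal)
      = (volume : Measure (EuclideanSpace ℝ (Fin d))).withDensity D := by
    rw [hpiwd, hDcomp, map_withDensity_equiv _ _ hDmeas,
      MeasurableEquiv.coe_toLp, (PiLp.volume_preserving_toLp (Fin d)).map_eq]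
  rw [hν0]
  set em := f.toHomeomorph.toMeasurableEquiv with hem
  have hcoe : ⇑em = ⇑f := rfl
  have hDf : (D ∘ ⇑em) = D := by
    funext z
    simp only [Function.comp_apply, hcoe]
    exact (D_eq_norm hσ (f z)).trans (by rw [f.norm_map]; exact (D_eq_norm hσ z).symm)
  have : Measure.map (⇑f) ((volume : Measure (EuclideanSpace ℝ (Fin d))).withDensity D)
      = (Measure.map (⇑em) (volume : Measure (EuclideanSpace ℝ (Fin d)))).withDensity D := by
    rw [← hcoe, ← hDf, map_withDensity_equiv em _ hDmeas, hDf]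
  rw [this, hcoe, f.measurePreserving.map_eq]

lemma key_pi {n : ℕ} {σ : ℝ} (hσ : 0 < σ) {c : ℝ} (hc : 0 < c)
    {U : Set (Fin (n+1) → ℝ)} (hU : MeasurableSet U) (a : ℝ)
    (h : gaussianReal 0 1 (Set.Iic a)
      ≤ Measure.pi (fun _ : Fin (n+1) => gaussianReal 0 (σ^2).toNNReal) U) :
    gaussianReal 0 1 (Set.Iic (a - c/σ))
      ≤ Measure.pi (fun _ : Fin (n+1) => gaussianReal 0 (σ^2).toNNReal)
        ((fun y => Pi.single (0 : Fin (n+1)) c + y) ⁻¹' U) := by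
  set μpi := Measure.pi (fun _ : Fin (n+1) => gaussianReal 0 (σ^2).toNNReal) with hμpi
  set g : (Fin (n+1) → ℝ) → ℝ≥0∞ :=
    fun y => ENNReal.ofReal (rexp (c * y 0 / σ^2 - c^2 / (2*σ^2))) with hgdef
  have hgmeas : Measurable g :=
    (((((measurable_pi_apply (0 : Fin (n+1)) : Measurable fun y : Fin (n+1) → ℝ => y 0).const_mul c).div_const _).sub_const _).exp).ennreal_ofReal
  have hshift_meas : Measurable (fun y : Fin (n+1) → ℝ => Pi.single (0 : Fin (n+1)) c + y) :=
    measurable_pi_lambda _ fun j => (measurable_pi_apply j).const_add _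
  have hmap := map_shift_pi (n := n) hσ c
  have hLHS : μpi ((fun y => Pi.single (0 : Fin (n+1)) c + y) ⁻¹' U)
      = (μpi.withDensity g) U := by
    rw [hgdef, ← hmap, Measure.map_apply hshift_meas hU]
  set H : Set (Fin (n+1) → ℝ) := (fun y : Fin (n+1) → ℝ => y 0) ⁻¹' (Set.Iic (σ * a)) with hHdef
  have hHmeas : MeasurableSet H := (measurable_pi_apply 0) measurableSet_Iic
  have hμH : μpi H = gaussianReal 0 1 (Set.Iic a) := by
    rw [hHdef, ← Measure.map_apply (measurable_pi_apply 0) measurableSet_Iic,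
      map_eval_pi, gauss_Iic hσ]
    congr 2
    field_simp
  have hνH : (μpi.withDensity g) H = gaussianReal 0 1 (Set.Iic (a - c/σ)) := by
    rw [hgdef, ← hmap, Measure.map_apply hshift_meas hHmeas]
    have hpre : (fun y : Fin (n+1) → ℝ => Pi.single (0 : Fin (n+1)) c + y) ⁻¹' H
        = (fun y : Fin (n+1) → ℝ => y 0) ⁻¹' (Set.Iic (σ * a - c)) := by
      ext y
      simp only [hHdef, Set.mem_preimage, Pi.add_apply, Pi.single_eq_same, Set.mem_Iic]
      constructor
      · intro hy; linarith
      · intro hy; linarith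
    rw [hpre, ← Measure.map_apply (measurable_pi_apply 0) measurableSet_Iic,
      map_eval_pi, gauss_Iic hσ]
    congr 2
    field_simp
  have h1 : ∀ y ∈ H, g y ≤ ENNReal.ofReal (rexp (c * (σ*a) / σ^2 - c^2 / (2*σ^2))) := by
    intro y hy
    have hy' : y 0 ≤ σ * a := hy
    apply ENNReal.ofReal_le_ofReal
    apply Real.exp_le_exp.2
    have hσ2 : (0:ℝ) < σ^2 := by positivity
    gcongr
  have h2 : ∀ y ∉ H, ENNReal.ofReal (rexp (c * (σ*a) / σ^2 - c^2 / (2*σ^2))) ≤ g y := by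
    intro y hy
    have hy' : σ * a ≤ y 0 := le_of_not_ge hy
    apply ENNReal.ofReal_le_ofReal
    apply Real.exp_le_exp.2
    have hσ2 : (0:ℝ) < σ^2 := by positivity
    gcongr
  have hle : μpi H ≤ μpi U := by rw [hμH]; exact h
  have hnp := np_lemma μpi hgmeas _ hU hHmeas h1 h2 hle
  rw [hνH] at hnp
  rw [hLHS]
  exact hnp

noncomputable def nu (d : ℕ) (σ : ℝ) : Measure (EuclideanSpace ℝ (Fin d)) :=
  Measure.map (MeasurableEquiv.toLp 2 (Fin d → ℝ))
    (Measure.pi fun _ : Fin d => gaussianReal 0 (σ ^ 2).toNNReal)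

instance (d : ℕ) (σ : ℝ) : IsProbabilityMeasure (nu d σ) :=
  Measure.isProbabilityMeasure_map (MeasurableEquiv.measurable _).aemeasurable

lemma key_E {n : ℕ} {σ : ℝ} (hσ : 0 < σ) {T : Set (EuclideanSpace ℝ (Fin (n+1)))}
    (hT : MeasurableSet T) (δ : EuclideanSpace ℝ (Fin (n+1))) (a : ℝ)
    (h : gaussianReal 0 1 (Set.Iic a) ≤ nu (n+1) σ T) :
    gaussianReal 0 1 (Set.Iic (a - ‖δ‖ / σ))
      ≤ nu (n+1) σ ((fun z => δ + z) ⁻¹' T) := by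
  by_cases hδ : δ = 0
  · subst hδ
    have hid : (fun z : EuclideanSpace ℝ (Fin (n+1)) => (0 : EuclideanSpace ℝ (Fin (n+1))) + z)
        = id := funext fun z => zero_add z
    rw [hid, Set.preimage_id]
    simpa using h
  have hc : 0 < ‖δ‖ := norm_pos_iff.2 hδ
  -- build an orthonormal basis whose 0-th vector is δ/‖δ‖
  set u : EuclideanSpace ℝ (Fin (n+1)) := ‖δ‖⁻¹ • δ with hu_def
  have hu : ‖u‖ = 1 := norm_smul_inv_norm hδ
  have hortho : Orthonormal ℝ (Set.restrict {(0 : Fin (n+1))} (fun _ => u)) := by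
    constructor
    · intro i; exact hu
    · intro i j hij
      exact absurd (Subtype.ext (by
        have hi := i.2; have hj := j.2
        simp only [Set.mem_singleton_iff] at hi hj
        rw [hi, hj])) hij
  have hcard : Module.finrank ℝ (EuclideanSpace ℝ (Fin (n+1))) = Fintype.card (Fin (n+1)) := by
    simp [finrank_euclideanSpace]
  obtain ⟨b, hb⟩ := hortho.exists_orthonormalBasis_extension_of_card_eq hcard
  have hb0 : b 0 = u := hb 0 rfl
  set f := b.repr.symm with hf_def
  have hf0 : f (EuclideanSpace.single (0 : Fin (n+1)) (1:ℝ)) = u := by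
    rw [hf_def, OrthonormalBasis.repr_symm_single, hb0]
  have hfs : f (‖δ‖ • EuclideanSpace.single (0 : Fin (n+1)) (1:ℝ)) = δ := by
    rw [f.map_smul, hf0, hu_def, smul_smul, mul_inv_cancel₀ hc.ne', one_smul]
  have rot : Measure.map f (nu (n+1) σ) = nu (n+1) σ := rot_invariant hσ f
  have hfmeas : Measurable f := f.continuous.measurable
  set T' := ⇑f ⁻¹' T with hT'_def
  have hT' : MeasurableSet T' := hfmeas hT
  have hνT : nu (n+1) σ T = nu (n+1) σ T' := by
    conv_lhs => rw [← rot]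
    rw [Measure.map_apply hfmeas hT]
  set s := ‖δ‖ • EuclideanSpace.single (0 : Fin (n+1)) (1:ℝ) with hs_def
  have hpre : ⇑f ⁻¹' ((fun z => δ + z) ⁻¹' T) = (fun w => s + w) ⁻¹' T' := by
    ext w
    simp only [Set.mem_preimage, hT'_def]
    rw [map_add, hfs]
  have hνshift : nu (n+1) σ ((fun z => δ + z) ⁻¹' T)
      = nu (n+1) σ ((fun w => s + w) ⁻¹' T') := by
    have hmeasT : MeasurableSet ((fun z : EuclideanSpace ℝ (Fin (n+1)) => δ + z) ⁻¹' T) :=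
      (measurable_const_add δ) hT
    conv_lhs => rw [← rot]
    rw [Measure.map_apply hfmeas hmeasT, hpre]
  -- transfer to the pi side
  set eS := MeasurableEquiv.toLp 2 (Fin (n+1) → ℝ) with heS_def
  set U := ⇑eS ⁻¹' T' with hU_def
  have hUmeas : MeasurableSet U := eS.measurable hT'
  have hνT'U : nu (n+1) σ T' = Measure.pi (fun _ : Fin (n+1) => gaussianReal 0 (σ^2).toNNReal) U := by
    rw [nu, Measure.map_apply eS.measurable hT']
  have hadd : ∀ y : Fin (n+1) → ℝ, eS (Pi.single (0 : Fin (n+1)) ‖δ‖ + y) = s + eS y := by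
    intro y
    ext j
    simp only [heS_def, MeasurableEquiv.toLp_apply, PiLp.toLp_apply,
      Pi.add_apply, hs_def, PiLp.add_apply, PiLp.smul_apply, EuclideanSpace.single_apply,
      smul_eq_mul, Pi.single_apply]
    by_cases hj : j = 0 <;> simp [hj]
  have hUpre : ⇑eS ⁻¹' ((fun w => s + w) ⁻¹' T')
      = (fun y => Pi.single (0 : Fin (n+1)) ‖δ‖ + y) ⁻¹' U := by
    ext y
    simp only [Set.mem_preimage, hU_def]
    rw [hadd y]
  have hshift_meas : Measurable (fun y : Fin (n+1) → ℝ => Pi.single (0 : Fin (n+1)) ‖δ‖ + y) :=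
    measurable_pi_lambda _ fun j => (measurable_pi_apply j).const_add _
  have hνs : nu (n+1) σ ((fun w => s + w) ⁻¹' T')
      = Measure.pi (fun _ : Fin (n+1) => gaussianReal 0 (σ^2).toNNReal)
        ((fun y => Pi.single (0 : Fin (n+1)) ‖δ‖ + y) ⁻¹' U) := by
    rw [nu, Measure.map_apply eS.measurable ((measurable_const_add s) hT'), hUpre]
  rw [hνshift, hνs]
  exact key_pi hσ hc hUmeas a (by rw [← hνT'U, ← hνT]; exact h)

end GaussNP

/-- Gaussian Neyman–Pearson shift lower bound: if `μ_x(S) ≥ Φ(a)` then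
`μ_{x+δ}(S) ≥ Φ(a − ‖δ‖₂/σ)`. -/
theorem gaussian_shift_lower_bound
    (d : ℕ) (hd : 1 ≤ d) (σ : ℝ) (hσ : 0 < σ)
    (S : Set (EuclideanSpace ℝ (Fin d))) (hS : MeasurableSet S)
    (x δ : EuclideanSpace ℝ (Fin d)) (a : ℝ)
    (h : stdNormalCDF a ≤ (isoGaussian d σ x S).toReal) :
    stdNormalCDF (a - ‖δ‖ / σ) ≤ (isoGaussian d σ (x + δ) S).toReal := by
  obtain ⟨n, rfl⟩ : ∃ n, d = n + 1 := ⟨d - 1, (Nat.succ_pred_eq_of_pos hd).symm⟩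
  have hisoS : ∀ z : EuclideanSpace ℝ (Fin (n+1)),
      isoGaussian (n+1) σ z S = GaussNP.nu (n+1) σ ((fun η => z + η) ⁻¹' S) := fun z => by
    show (Measure.map (fun η => z + η) (GaussNP.nu (n+1) σ)) S = _
    rw [Measure.map_apply (measurable_const_add z) hS]
  have hT : MeasurableSet ((fun η => x + η) ⁻¹' S) := (measurable_const_add x) hS
  have hTδ : (fun η => (x + δ) + η) ⁻¹' S
      = (fun z => δ + z) ⁻¹' ((fun η => x + η) ⁻¹' S) := by
    ext z
    simp [Set.mem_preimage, add_assoc]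
  unfold stdNormalCDF at h ⊢
  rw [hisoS x] at h
  have h' : gaussianReal 0 1 (Set.Iic a) ≤ GaussNP.nu (n+1) σ ((fun η => x + η) ⁻¹' S) :=
    (ENNReal.toReal_le_toReal (measure_ne_top _ _) (measure_ne_top _ _)).mp h
  have hkey := GaussNP.key_E hσ hT δ a h'
  rw [hisoS (x + δ), hTδ]
  exact (ENNReal.toReal_le_toReal (measure_ne_top _ _) (measure_ne_top _ _)).mpr hkey
end

section
/- Fix A ∈ 𝒜 and suppose 0 < p_f(x, A) < 1 for all x ∈ ℝ^d. Since Φ is a strictly increasing continuous bijection from ℝ onto (0,1), its inverse Φ⁻¹ is well defined on (0,1). Then the map x ↦ Φ⁻¹(p_f(x, A)) is (1/σ)-Lipschitz on ℝ^d: for all x, y ∈ ℝ^d, |Φ⁻¹(p_f(x, A)) − Φ⁻¹(p_f(y, A))| ≤ ‖x − y‖₂ / σ. -/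
open MeasureTheory ProbabilityTheory

open MeasureTheory ProbabilityTheory Real Set
open scoped ENNReal NNReal

section Aux

variable {α β : Type*} [MeasurableSpace α] [MeasurableSpace β]

/- pointwise pdf product identity (convolution, completing the square) -/
lemma gaussianPDFReal_mul_eq (m₁ m₂ : ℝ) (v₁ v₂ : ℝ≥0) (h₁ : v₁ ≠ 0) (h₂ : v₂ ≠ 0) (z x : ℝ) :
    gaussianPDFReal m₁ v₁ x * gaussianPDFReal m₂ v₂ (z - x)
      = gaussianPDFReal (m₁ + m₂) (v₁ + v₂) z *
        gaussianPDFReal ((v₂ * m₁ + v₁ * (z - m₂)) / (v₁ + v₂)) (v₁ * v₂ / (v₁ + v₂)) x := by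
  have hV1 : (0:ℝ) < v₁ := lt_of_le_of_ne v₁.2 (by exact_mod_cast h₁.symm)
  have hV2 : (0:ℝ) < v₂ := lt_of_le_of_ne v₂.2 (by exact_mod_cast h₂.symm)
  have hVs : (0:ℝ) < (v₁:ℝ) + v₂ := by linarith
  unfold gaussianPDFReal
  push_cast
  have hconst : (Real.sqrt (2 * π * v₁))⁻¹ * (Real.sqrt (2 * π * v₂))⁻¹
      = (Real.sqrt (2 * π * ((v₁:ℝ) + v₂)))⁻¹ *
        (Real.sqrt (2 * π * ((v₁:ℝ) * v₂ / ((v₁:ℝ) + v₂))))⁻¹ := by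
    rw [← mul_inv, ← mul_inv, ← Real.sqrt_mul (by positivity), ← Real.sqrt_mul (by positivity)]
    congr 2
    field_simp
  have hexp : Real.exp (-(x - m₁) ^ 2 / (2 * v₁)) * Real.exp (-(z - x - m₂) ^ 2 / (2 * v₂))
      = Real.exp (-(z - (m₁ + m₂)) ^ 2 / (2 * ((v₁:ℝ) + v₂))) *
        Real.exp (-(x - ((v₂:ℝ) * m₁ + (v₁:ℝ) * (z - m₂)) / ((v₁:ℝ) + v₂)) ^ 2 /
          (2 * ((v₁:ℝ) * v₂ / ((v₁:ℝ) + v₂)))) := by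
    rw [← Real.exp_add, ← Real.exp_add, Real.exp_eq_exp]
    field_simp
    ring
  calc (Real.sqrt (2 * π * v₁))⁻¹ * Real.exp (-(x - m₁) ^ 2 / (2 * v₁)) *
        ((Real.sqrt (2 * π * v₂))⁻¹ * Real.exp (-(z - x - m₂) ^ 2 / (2 * v₂)))
      = (Real.sqrt (2 * π * v₁))⁻¹ * (Real.sqrt (2 * π * v₂))⁻¹ *
        (Real.exp (-(x - m₁) ^ 2 / (2 * v₁)) * Real.exp (-(z - x - m₂) ^ 2 / (2 * v₂))) := by
        ring
    _ = (Real.sqrt (2 * π * ((v₁:ℝ) + v₂)))⁻¹ *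
        (Real.sqrt (2 * π * ((v₁:ℝ) * v₂ / ((v₁:ℝ) + v₂))))⁻¹ *
        (Real.exp (-(z - (m₁ + m₂)) ^ 2 / (2 * ((v₁:ℝ) + v₂))) *
         Real.exp (-(x - ((v₂:ℝ) * m₁ + (v₁:ℝ) * (z - m₂)) / ((v₁:ℝ) + v₂)) ^ 2 /
          (2 * ((v₁:ℝ) * v₂ / ((v₁:ℝ) + v₂))))) := by rw [hconst, hexp]
    _ = _ := by ring

/- convolution of Gaussians -/
lemma gaussianReal_conv (m₁ m₂ : ℝ) (v₁ v₂ : ℝ≥0) :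
    ((gaussianReal m₁ v₁).prod (gaussianReal m₂ v₂)).map (fun p => p.1 + p.2)
      = gaussianReal (m₁ + m₂) (v₁ + v₂) := by
  by_cases h₁ : v₁ = 0
  · subst h₁
    rw [gaussianReal_zero_var, Measure.dirac_prod,
      Measure.map_map measurable_add (measurable_prodMk_left),
      show ((fun p : ℝ × ℝ => p.1 + p.2) ∘ Prod.mk m₁) = (m₁ + ·) from rfl,
      gaussianReal_map_const_add]
    rw [add_comm m₂ m₁, zero_add]
  by_cases h₂ : v₂ = 0
  · subst h₂
    rw [gaussianReal_zero_var, Measure.prod_dirac,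
      Measure.map_map measurable_add (measurable_prodMk_right),
      show ((fun p : ℝ × ℝ => p.1 + p.2) ∘ (fun x => (x, m₂))) = (· + m₂) from rfl,
      gaussianReal_map_add_const]
    rw [add_zero]
  have hsum : v₁ + v₂ ≠ 0 := by simp [h₁]
  have hstar : v₁ * v₂ / (v₁ + v₂) ≠ 0 := by
    rw [div_ne_zero_iff]
    exact ⟨mul_ne_zero h₁ h₂, hsum⟩
  ext s hs
  have hsec : ∀ x : ℝ, (gaussianReal m₂ v₂) (Prod.mk x ⁻¹' ((fun p : ℝ × ℝ => p.1 + p.2) ⁻¹' s))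
      = ∫⁻ z in s, gaussianPDF m₂ v₂ (z - x) := by
    intro x
    have h0 : Prod.mk x ⁻¹' ((fun p : ℝ × ℝ => p.1 + p.2) ⁻¹' s) = (fun y => x + y) ⁻¹' s := rfl
    rw [h0, ← Measure.map_apply (measurable_const_add x) hs, gaussianReal_map_const_add,
      gaussianReal_apply _ h₂]
    refine lintegral_congr fun z => ?_
    simp only [gaussianPDF, ← gaussianPDFReal_sub]
  have hm2 : ∀ x : ℝ, Measurable fun z => gaussianPDF m₂ v₂ (z - x) := fun x =>
    (measurable_gaussianPDF _ _).comp (measurable_id.sub_const x)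
  have hFmeas : Measurable fun x => ∫⁻ z in s, gaussianPDF m₂ v₂ (z - x) := by
    have hm : Measurable (Function.uncurry fun x z => gaussianPDF m₂ v₂ (z - x)) :=
      (measurable_gaussianPDF _ _).comp (measurable_snd.sub measurable_fst)
    exact hm.lintegral_prod_right
  have hni : ∀ z : ℝ, ∫⁻ x, gaussianPDF m₁ v₁ x * gaussianPDF m₂ v₂ (z - x)
      = gaussianPDF (m₁ + m₂) (v₁ + v₂) z := by
    intro z
    have hpt : ∀ x : ℝ, gaussianPDF m₁ v₁ x * gaussianPDF m₂ v₂ (z - x)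
        = ENNReal.ofReal (gaussianPDFReal (m₁ + m₂) (v₁ + v₂) z) *
          ENNReal.ofReal (gaussianPDFReal ((v₂ * m₁ + v₁ * (z - m₂)) / (v₁ + v₂))
            (v₁ * v₂ / (v₁ + v₂)) x) := by
      intro x
      rw [gaussianPDF, gaussianPDF, ← ENNReal.ofReal_mul (gaussianPDFReal_nonneg m₁ v₁ x),
        gaussianPDFReal_mul_eq m₁ m₂ v₁ v₂ h₁ h₂ z x,
        ENNReal.ofReal_mul (gaussianPDFReal_nonneg _ _ _)]
    rw [lintegral_congr hpt, lintegral_const_mul _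
      ((measurable_gaussianPDFReal _ _).ennreal_ofReal)]
    have : ∫⁻ x, ENNReal.ofReal (gaussianPDFReal ((v₂ * m₁ + v₁ * (z - m₂)) / (v₁ + v₂))
        (v₁ * v₂ / (v₁ + v₂)) x) = 1 := lintegral_gaussianPDF_eq_one _ hstar
    rw [this, mul_one]
    rfl
  calc ((gaussianReal m₁ v₁).prod (gaussianReal m₂ v₂)).map (fun p => p.1 + p.2) s
      = ((gaussianReal m₁ v₁).prod (gaussianReal m₂ v₂)) ((fun p : ℝ × ℝ => p.1 + p.2) ⁻¹' s) :=
        Measure.map_apply measurable_add hs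
    _ = ∫⁻ x, (gaussianReal m₂ v₂) (Prod.mk x ⁻¹' ((fun p : ℝ × ℝ => p.1 + p.2) ⁻¹' s))
          ∂(gaussianReal m₁ v₁) := Measure.prod_apply (measurable_add hs)
    _ = ∫⁻ x, (∫⁻ z in s, gaussianPDF m₂ v₂ (z - x)) ∂(gaussianReal m₁ v₁) :=
        lintegral_congr hsec
    _ = ∫⁻ x, (gaussianPDF m₁ v₁ * fun x => ∫⁻ z in s, gaussianPDF m₂ v₂ (z - x)) x := by
        rw [gaussianReal_of_var_ne_zero _ h₁,
          lintegral_withDensity_eq_lintegral_mul _ (measurable_gaussianPDF _ _) hFmeas]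
    _ = ∫⁻ x, ∫⁻ z in s, gaussianPDF m₁ v₁ x * gaussianPDF m₂ v₂ (z - x) := by
        refine lintegral_congr fun x => ?_
        simp only [Pi.mul_apply]
        exact (lintegral_const_mul _ (hm2 x)).symm
    _ = ∫⁻ z in s, ∫⁻ x, gaussianPDF m₁ v₁ x * gaussianPDF m₂ v₂ (z - x) := by
        refine lintegral_lintegral_swap ?_
        exact (((measurable_gaussianPDF _ _).comp measurable_fst).mul
          ((measurable_gaussianPDF _ _).comp (measurable_snd.sub measurable_fst))).aemeasurable
    _ = ∫⁻ z in s, gaussianPDF (m₁ + m₂) (v₁ + v₂) z := lintegral_congr hni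
    _ = gaussianReal (m₁ + m₂) (v₁ + v₂) s := (gaussianReal_apply _ hsum s).symm

/- sum of coordinates of independent Gaussians -/
lemma pi_gaussian_sum (n : ℕ) (m : Fin n → ℝ) (w : Fin n → ℝ≥0) :
    (Measure.pi fun i => gaussianReal (m i) (w i)).map (fun z => ∑ i, z i)
      = gaussianReal (∑ i, m i) (∑ i, w i) := by
  induction n with
  | zero =>
      rw [Measure.pi_of_empty]
      rw [Measure.map_dirac' (by fun_prop : Measurable fun z : Fin 0 → ℝ => ∑ i, z i)]
      simp [gaussianReal_zero_var]
  | succ n ih =>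
      let e := MeasurableEquiv.piFinSuccAbove (fun _ : Fin (n + 1) => ℝ) 0
      have hmp := measurePreserving_piFinSuccAbove (fun i => gaussianReal (m i) (w i)) 0
      have hsum0 : (fun z : Fin (n + 1) → ℝ => ∑ i, z i)
          = (fun p : ℝ × (Fin n → ℝ) => p.1 + ∑ j, p.2 j) ∘ e := by
        funext z
        simp only [Function.comp_apply]
        rw [Fin.sum_univ_succAbove z 0]
        rfl
      rw [hsum0, ← Measure.map_map (by fun_prop) e.measurable, hmp.map_eq]
      have htail := ih (fun j => m ((0 : Fin (n + 1)).succAbove j))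
        (fun j => w ((0 : Fin (n + 1)).succAbove j))
      have hpm : (fun p : ℝ × (Fin n → ℝ) => p.1 + ∑ j, p.2 j)
          = (fun q : ℝ × ℝ => q.1 + q.2) ∘ (Prod.map id (fun z : Fin n → ℝ => ∑ j, z j)) := by
        funext p; rfl
      rw [hpm, ← Measure.map_map measurable_add (measurable_id.prodMap (by fun_prop)),
        ← Measure.map_prod_map _ _ measurable_id (by fun_prop), Measure.map_id, htail,
        gaussianReal_conv]
      rw [Fin.sum_univ_succAbove m 0, Fin.sum_univ_succAbove w 0]

/- weighted sum of coordinates -/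
lemma pi_gaussian_weighted (n : ℕ) (m : Fin n → ℝ) (v : ℝ≥0) (c : Fin n → ℝ) :
    (Measure.pi fun i => gaussianReal (m i) v).map (fun z => ∑ i, c i * z i)
      = gaussianReal (∑ i, c i * m i) ((∑ i, ((c i)^2).toNNReal) * v) := by
  have hmp : MeasurePreserving (fun (z : Fin n → ℝ) i => c i * z i)
      (Measure.pi fun i => gaussianReal (m i) v)
      (Measure.pi fun i => gaussianReal (c i * m i) (((c i)^2).toNNReal * v)) := by
    refine measurePreserving_pi _ _ fun i => ⟨by fun_prop, ?_⟩
    rw [show (HMul.hMul (c i) : ℝ → ℝ) = (c i * ·) from rfl, gaussianReal_map_const_mul]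
    congr 1
    ext
    simp [Real.coe_toNNReal _ (sq_nonneg (c i))]
  have hcomp : (fun z : Fin n → ℝ => ∑ i, c i * z i)
      = (fun z : Fin n → ℝ => ∑ i, z i) ∘ (fun (z : Fin n → ℝ) i => c i * z i) := rfl
  rw [hcomp, ← Measure.map_map (by fun_prop) hmp.measurable, hmp.map_eq, pi_gaussian_sum,
    Finset.sum_mul]

/- 1-d Gaussian density ratio -/
lemma gaussianReal_eq_withDensity (x y : ℝ) (v : ℝ≥0) (hv : v ≠ 0) :
    gaussianReal y v = (gaussianReal x v).withDensity
      (fun t => ENNReal.ofReal (Real.exp (((y - x) * t + (x ^ 2 - y ^ 2) / 2) / v))) := by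
  have hv' : (v : ℝ) ≠ 0 := by exact_mod_cast hv
  have hD : Measurable fun t : ℝ =>
      ENNReal.ofReal (Real.exp (((y - x) * t + (x ^ 2 - y ^ 2) / 2) / (v : ℝ))) := by
    fun_prop
  rw [gaussianReal_of_var_ne_zero x hv, gaussianReal_of_var_ne_zero y hv,
    ← withDensity_mul _ (measurable_gaussianPDF x v) hD]
  congr 1
  funext t
  simp only [Pi.mul_apply, gaussianPDF,
    ← ENNReal.ofReal_mul (gaussianPDFReal_nonneg _ _ _)]
  congr 1
  unfold gaussianPDFReal
  have hexp : Real.exp (-(t - y) ^ 2 / (2 * (v : ℝ)))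
      = Real.exp (-(t - x) ^ 2 / (2 * (v : ℝ))) *
        Real.exp (((y - x) * t + (x ^ 2 - y ^ 2) / 2) / (v : ℝ)) := by
    rw [← Real.exp_add, Real.exp_eq_exp]
    field_simp
    ring
  rw [hexp]
  ring

/- map of withDensity through a measurable equiv -/
lemma map_withDensity_equiv (e : α ≃ᵐ β) (μ : Measure α) (g : β → ℝ≥0∞) (hg : Measurable g) :
    Measure.map e (μ.withDensity (g ∘ e)) = (Measure.map e μ).withDensity g := by
  ext s hs
  rw [MeasurableEquiv.map_apply, withDensity_apply _ hs, setLIntegral_map hs hg e.measurable,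
    withDensity_apply _ (e.measurable hs)]
  rfl

/- product of withDensity -/
lemma prod_withDensity (μ₁ : Measure α) (μ₂ : Measure β) [SigmaFinite μ₁] [SigmaFinite μ₂]
    (κ₁ : Measure α) (κ₂ : Measure β) [IsProbabilityMeasure κ₁] [IsProbabilityMeasure κ₂]
    (g₁ : α → ℝ≥0∞) (g₂ : β → ℝ≥0∞) (hg₁ : Measurable g₁) (hg₂ : Measurable g₂)
    (h₁ : κ₁ = μ₁.withDensity g₁) (h₂ : κ₂ = μ₂.withDensity g₂) :
    κ₁.prod κ₂ = (μ₁.prod μ₂).withDensity (fun p => g₁ p.1 * g₂ p.2) := by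
  refine Measure.prod_eq fun s t hs ht => ?_
  rw [withDensity_apply _ (hs.prod ht), ← Measure.prod_restrict,
    lintegral_prod_mul hg₁.aemeasurable hg₂.aemeasurable, h₁, h₂,
    withDensity_apply _ hs, withDensity_apply _ ht]

/- pi of withDensity -/
lemma pi_withDensity {n : ℕ} (μ κ : Fin n → Measure ℝ) [∀ i, SigmaFinite (μ i)]
    [∀ i, IsProbabilityMeasure (κ i)] (g : Fin n → ℝ → ℝ≥0∞) (hg : ∀ i, Measurable (g i))
    (h : ∀ i, κ i = (μ i).withDensity (g i)) :
    Measure.pi κ = (Measure.pi μ).withDensity (fun z => ∏ i, g i (z i)) := by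
  induction n with
  | zero =>
      have h1 : (fun z : Fin 0 → ℝ => ∏ i, g i (z i)) = 1 := by
        funext z; simp
      rw [h1, withDensity_one, Measure.pi_of_empty, Measure.pi_of_empty]
  | succ n ih =>
      let e := MeasurableEquiv.piFinSuccAbove (fun _ : Fin (n + 1) => ℝ) 0
      have hκe := measurePreserving_piFinSuccAbove κ 0
      have hμe := measurePreserving_piFinSuccAbove μ 0
      have htail : Measure.pi (fun j => κ ((0 : Fin (n + 1)).succAbove j))
          = (Measure.pi fun j => μ ((0 : Fin (n + 1)).succAbove j)).withDensity
            (fun z => ∏ j, g ((0 : Fin (n + 1)).succAbove j) (z j)) :=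
        ih _ _ _ (fun j => hg _) (fun j => h _)
      have hGmeas : Measurable fun z : Fin (n + 1) → ℝ => ∏ i, g i (z i) :=
        Finset.measurable_prod _ fun i _ => (hg i).comp (measurable_pi_apply i)
      have hprod : (κ 0).prod (Measure.pi fun j => κ ((0 : Fin (n + 1)).succAbove j))
          = ((μ 0).prod (Measure.pi fun j => μ ((0 : Fin (n + 1)).succAbove j))).withDensity
            (fun p => g 0 p.1 * ∏ j, g ((0 : Fin (n + 1)).succAbove j) (p.2 j)) :=
        by
          haveI : ∀ j, SigmaFinite (μ ((0 : Fin (n + 1)).succAbove j)) := fun j => inferInstance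
          exact prod_withDensity (μ 0) (Measure.pi fun j => μ ((0 : Fin (n + 1)).succAbove j))
            (κ 0) (Measure.pi fun j => κ ((0 : Fin (n + 1)).succAbove j)) (g 0)
            (fun z => ∏ j, g ((0 : Fin (n + 1)).succAbove j) (z j)) (hg 0)
            (Finset.measurable_prod _ fun j _ => (hg _).comp (measurable_pi_apply j))
            (h 0) htail
      have hcomp : (fun p : ℝ × (Fin n → ℝ) => g 0 p.1 * ∏ j, g ((0 : Fin (n + 1)).succAbove j) (p.2 j))
          = (fun z : Fin (n + 1) → ℝ => ∏ i, g i (z i)) ∘ e.symm := by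
        funext p
        simp only [Function.comp_apply]
        rw [Fin.prod_univ_succAbove (fun i => g i (e.symm p i)) 0]
        simp [e, MeasurableEquiv.piFinSuccAbove]
      calc Measure.pi κ
          = Measure.map e.symm ((κ 0).prod (Measure.pi fun j => κ ((0 : Fin (n+1)).succAbove j))) :=
            (hκe.symm e).map_eq.symm
        _ = Measure.map e.symm (((μ 0).prod (Measure.pi fun j => μ ((0 : Fin (n+1)).succAbove j))).withDensity
              ((fun z : Fin (n + 1) → ℝ => ∏ i, g i (z i)) ∘ e.symm)) := by rw [hprod, hcomp]
        _ = (Measure.map e.symm ((μ 0).prod (Measure.pi fun j => μ ((0 : Fin (n+1)).succAbove j)))).withDensity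
              (fun z => ∏ i, g i (z i)) := map_withDensity_equiv e.symm _ _ hGmeas
        _ = (Measure.pi μ).withDensity (fun z => ∏ i, g i (z i)) := by
              rw [(hμe.symm e).map_eq]

/- Neyman-Pearson type inequality -/
lemma np_ineq (μ : Measure α) [IsFiniteMeasure μ] (r : α → ℝ≥0∞)
    (S H : Set α) (hS : MeasurableSet S) (hH : MeasurableSet H) (hμ : μ S = μ H)
    (r₀ : ℝ≥0∞) (hr : Measurable r) (hup : ∀ z ∈ H, r z ≤ r₀) (hlow : ∀ z ∉ H, r₀ ≤ r z) :
    μ.withDensity r H ≤ μ.withDensity r S := by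
  set ρ := μ.withDensity r with hρ
  have hdiff : μ (H \ S) = μ (S \ H) := by
    have h1 : μ (H ∩ S) + μ (H \ S) = μ H := measure_inter_add_diff H hS
    have h2 : μ (S ∩ H) + μ (S \ H) = μ S := measure_inter_add_diff S hH
    rw [Set.inter_comm] at h2
    have := h1.trans (hμ.symm.trans h2.symm)
    exact (ENNReal.add_right_inj (measure_ne_top μ _)).mp this
  have hkey : ρ (H \ S) ≤ ρ (S \ H) := by
    calc ρ (H \ S) = ∫⁻ z in H \ S, r z ∂μ := withDensity_apply _ (hH.diff hS)
    _ ≤ ∫⁻ _ in H \ S, r₀ ∂μ :=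
        setLIntegral_mono measurable_const fun z hz => hup z hz.1
    _ = r₀ * μ (H \ S) := setLIntegral_const _ _
    _ = r₀ * μ (S \ H) := by rw [hdiff]
    _ = ∫⁻ _ in S \ H, r₀ ∂μ := (setLIntegral_const _ _).symm
    _ ≤ ∫⁻ z in S \ H, r z ∂μ := setLIntegral_mono hr fun z hz => hlow z hz.2
    _ = ρ (S \ H) := (withDensity_apply _ (hS.diff hH)).symm
  calc ρ H = ρ (H ∩ S) + ρ (H \ S) := (measure_inter_add_diff H hS).symm
  _ ≤ ρ (S ∩ H) + ρ (S \ H) := by rw [Set.inter_comm]; exact add_le_add le_rfl hkey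
  _ = ρ S := measure_inter_add_diff S hH

/- cdf of general Gaussian via Φ -/
lemma gaussianReal_Iic (m : ℝ) (v : ℝ≥0) (hv : v ≠ 0) (a : ℝ) :
    gaussianReal m v (Set.Iic a) = ENNReal.ofReal (stdNormalCDF ((a - m) / Real.sqrt v)) := by
  have hvpos : (0 : ℝ) < v := lt_of_le_of_ne v.2 (by exact_mod_cast hv.symm)
  have hc : (0 : ℝ) < Real.sqrt v := Real.sqrt_pos.mpr hvpos
  have h1 : (gaussianReal 0 1).map (fun t => Real.sqrt v * t) = gaussianReal 0 v := by
    rw [show (fun t : ℝ => Real.sqrt v * t) = (Real.sqrt v * ·) from rfl,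
      gaussianReal_map_const_mul]
    congr 1
    · ring
    · ext
      simp [Real.sq_sqrt v.2]
  have h2 : (gaussianReal 0 v).map (· + m) = gaussianReal m v := by
    rw [gaussianReal_map_add_const]; congr 1; ring
  rw [← h2, Measure.map_apply (measurable_add_const m) measurableSet_Iic]
  have hpre : (· + m) ⁻¹' Set.Iic a = Set.Iic (a - m) := by
    ext t; simp [le_sub_iff_add_le]
  rw [hpre, ← h1, Measure.map_apply (measurable_const_mul _) measurableSet_Iic]
  have hpre2 : (fun t => Real.sqrt v * t) ⁻¹' Set.Iic (a - m) = Set.Iic ((a - m) / Real.sqrt v) := by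
    ext t
    simp only [Set.mem_preimage, Set.mem_Iic]
    rw [le_div_iff₀ hc, mul_comm]
  rw [hpre2, stdNormalCDF, ENNReal.ofReal_toReal (measure_ne_top _ _)]

lemma stdNormalCDF_nonneg (a : ℝ) : 0 ≤ stdNormalCDF a := ENNReal.toReal_nonneg

lemma stdNormalCDF_strictMono : StrictMono stdNormalCDF := by
  intro a b hab
  unfold stdNormalCDF
  have hsplit : gaussianReal 0 1 (Set.Iic a) + gaussianReal 0 1 (Set.Ioc a b)
      = gaussianReal 0 1 (Set.Iic b) := by
    rw [← measure_union (Set.Iic_disjoint_Ioc le_rfl) measurableSet_Ioc,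
      Set.Iic_union_Ioc_eq_Iic hab.le]
  have hpos : gaussianReal 0 1 (Set.Ioc a b) ≠ 0 := by
    intro h0
    have := gaussianReal_absolutelyContinuous' (0 : ℝ) one_ne_zero h0
    rw [Real.volume_Ioc] at this
    simp only [ENNReal.ofReal_eq_zero, sub_nonpos] at this
    exact absurd this (not_le.mpr hab)
  have hlt : gaussianReal 0 1 (Set.Iic a) < gaussianReal 0 1 (Set.Iic b) := by
    rw [← hsplit]
    exact ENNReal.lt_add_right (measure_ne_top _ _) hpos
  exact ENNReal.toReal_lt_toReal (measure_ne_top _ _) (measure_ne_top _ _) |>.mpr hlt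

lemma gaussianPDF_le_one (t : ℝ) : gaussianPDF 0 1 t ≤ 1 := by
  rw [gaussianPDF, ← ENNReal.ofReal_one]
  refine ENNReal.ofReal_le_ofReal ?_
  unfold gaussianPDFReal
  have h1 : Real.exp (-(t - 0) ^ 2 / (2 * ((1 : ℝ≥0) : ℝ))) ≤ 1 := by
    rw [Real.exp_le_one_iff]
    have : (0:ℝ) ≤ (t - 0) ^ 2 := sq_nonneg _
    have h2 : (0:ℝ) < 2 * ((1 : ℝ≥0) : ℝ) := by norm_num
    exact div_nonpos_of_nonpos_of_nonneg (by linarith) h2.le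
  have h2 : (1:ℝ) ≤ Real.sqrt (2 * π * ((1 : ℝ≥0) : ℝ)) := by
    rw [show (2 * π * ((1 : ℝ≥0) : ℝ)) = 2 * π by norm_num]
    rw [Real.one_le_sqrt]
    nlinarith [Real.pi_gt_three]
  have h3 : (Real.sqrt (2 * π * ((1 : ℝ≥0) : ℝ)))⁻¹ ≤ 1 := by
    rw [inv_le_one_iff₀]; right; exact h2
  calc (Real.sqrt (2 * π * ((1 : ℝ≥0) : ℝ)))⁻¹ * Real.exp (-(t - 0) ^ 2 / (2 * ((1 : ℝ≥0) : ℝ)))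
      ≤ 1 * 1 := by
        refine mul_le_mul h3 h1 (Real.exp_nonneg _) (by norm_num)
  _ = 1 := by norm_num

lemma stdNormalCDF_diff_le {a b : ℝ} (hab : a ≤ b) :
    stdNormalCDF b - stdNormalCDF a ≤ b - a := by
  have hsplit : gaussianReal 0 1 (Set.Iic a) + gaussianReal 0 1 (Set.Ioc a b)
      = gaussianReal 0 1 (Set.Iic b) := by
    rw [← measure_union (Set.Iic_disjoint_Ioc le_rfl) measurableSet_Ioc,
      Set.Iic_union_Ioc_eq_Iic hab]
  have hIoc : gaussianReal 0 1 (Set.Ioc a b) ≤ ENNReal.ofReal (b - a) := by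
    rw [gaussianReal_apply _ one_ne_zero]
    calc ∫⁻ x in Set.Ioc a b, gaussianPDF 0 1 x
        ≤ ∫⁻ _ in Set.Ioc a b, 1 :=
          setLIntegral_mono measurable_const fun z _ => gaussianPDF_le_one z
      _ = volume (Set.Ioc a b) := by rw [setLIntegral_const, one_mul]
      _ = ENNReal.ofReal (b - a) := Real.volume_Ioc
  have h1 : stdNormalCDF b = stdNormalCDF a + (gaussianReal 0 1 (Set.Ioc a b)).toReal := by
    rw [stdNormalCDF, stdNormalCDF, ← hsplit, ENNReal.toReal_add (measure_ne_top _ _) (measure_ne_top _ _)]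
  rw [h1]
  have h2 : (gaussianReal 0 1 (Set.Ioc a b)).toReal ≤ b - a := by
    have := ENNReal.toReal_mono ENNReal.ofReal_ne_top hIoc
    rwa [ENNReal.toReal_ofReal (by linarith)] at this
  linarith

lemma stdNormalCDF_lipschitz : LipschitzWith 1 stdNormalCDF := by
  refine LipschitzWith.of_dist_le_mul fun a b => ?_
  rw [Real.dist_eq, Real.dist_eq, NNReal.coe_one, one_mul]
  rcases le_total a b with h | h
  · have h1 := stdNormalCDF_diff_le h
    have h2 := stdNormalCDF_strictMono.monotone h
    rw [abs_of_nonpos (by linarith), abs_of_nonpos (by linarith)]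
    linarith
  · have h1 := stdNormalCDF_diff_le h
    have h2 := stdNormalCDF_strictMono.monotone h
    rw [abs_of_nonneg (by linarith), abs_of_nonneg (by linarith)]
    linarith

lemma stdNormalCDF_surjOn : ∀ p : ℝ, 0 < p → p < 1 → ∃ a, stdNormalCDF a = p := by
  intro p hp0 hp1
  have htop : Filter.Tendsto stdNormalCDF Filter.atTop (nhds 1) := by
    have h1 := tendsto_measure_Iic_atTop (gaussianReal 0 1)
    rw [measure_univ] at h1
    have h2 : Filter.Tendsto ENNReal.toReal (nhds (1 : ℝ≥0∞)) (nhds 1) := by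
      have := ENNReal.tendsto_toReal (a := (1 : ℝ≥0∞)) ENNReal.one_ne_top
      simpa using this
    exact h2.comp h1
  have hbot : Filter.Tendsto (fun x => (gaussianReal 0 1 (Set.Ici x)).toReal)
      Filter.atBot (nhds 1) := by
    have h1 := tendsto_measure_Ici_atBot (gaussianReal 0 1)
    rw [measure_univ] at h1
    have h2 : Filter.Tendsto ENNReal.toReal (nhds (1 : ℝ≥0∞)) (nhds 1) := by
      have := ENNReal.tendsto_toReal (a := (1 : ℝ≥0∞)) ENNReal.one_ne_top
      simpa using this
    exact h2.comp h1
  obtain ⟨b, hb⟩ := (htop.eventually (eventually_gt_nhds hp1)).exists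
  obtain ⟨x, hx⟩ := (hbot.eventually (eventually_gt_nhds (show 1 - p < 1 by linarith))).exists
  have ha : stdNormalCDF (x - 1) < p := by
    have hdisj : Disjoint (Set.Iic (x - 1)) (Set.Ici x) := by
      rw [Set.disjoint_left]
      intro z hz hz2
      simp only [Set.mem_Iic] at hz
      simp only [Set.mem_Ici] at hz2
      linarith
    have hsum : gaussianReal 0 1 (Set.Iic (x - 1)) + gaussianReal 0 1 (Set.Ici x) ≤ 1 := by
      rw [← measure_union hdisj measurableSet_Ici, ← measure_univ (μ := gaussianReal 0 1)]
      exact measure_mono (Set.subset_univ _)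
    have hfin : stdNormalCDF (x - 1) + (gaussianReal 0 1 (Set.Ici x)).toReal ≤ 1 := by
      rw [stdNormalCDF, ← ENNReal.toReal_add (measure_ne_top _ _) (measure_ne_top _ _)]
      have := ENNReal.toReal_mono ENNReal.one_ne_top hsum
      simpa using this
    linarith
  have hab : x - 1 ≤ b := by
    by_contra hcon
    push_neg at hcon
    have := stdNormalCDF_strictMono.monotone hcon.le
    linarith
  have hmem : p ∈ Set.Icc (stdNormalCDF (x - 1)) (stdNormalCDF b) := ⟨ha.le, hb.le⟩
  obtain ⟨c, _, hc⟩ := intermediate_value_Icc hab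
    stdNormalCDF_lipschitz.continuous.continuousOn hmem
  exact ⟨c, hc⟩

/- the key one-sided inequality -/
lemma key_ineq {n : ℕ} (v : ℝ≥0) (hv : v ≠ 0) (T : Set (Fin n → ℝ)) (hT : MeasurableSet T)
    (X Y : Fin n → ℝ) (t : ℝ) (ht : 0 < t) (ht2 : ∑ i, (Y i - X i) ^ 2 = t ^ 2) (a : ℝ)
    (ha : (Measure.pi fun i => gaussianReal (X i) v) T = ENNReal.ofReal (stdNormalCDF a)) :
    ENNReal.ofReal (stdNormalCDF (a - t / Real.sqrt v))
      ≤ (Measure.pi fun i => gaussianReal (Y i) v) T := by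
  have hVpos : (0:ℝ) < v := lt_of_le_of_ne v.2 (by exact_mod_cast hv.symm)
  have hsv : (0:ℝ) < Real.sqrt v := Real.sqrt_pos.mpr hVpos
  set c : Fin n → ℝ := fun i => Y i - X i with hc
  set μX := Measure.pi fun i => gaussianReal (X i) v with hμX
  set μY := Measure.pi fun i => gaussianReal (Y i) v with hμY
  set ℓ : (Fin n → ℝ) → ℝ := fun z => ∑ i, c i * z i with hℓ
  have hℓmeas : Measurable ℓ := by fun_prop
  set mean : ℝ := ∑ i, c i * X i with hmean
  have hs' : (((∑ i, ((c i)^2).toNNReal) : ℝ≥0) : ℝ) = t^2 := by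
    rw [NNReal.coe_sum, ← ht2]
    exact Finset.sum_congr rfl fun i _ => Real.coe_toNNReal _ (sq_nonneg _)
  have hs'0 : (∑ i, ((c i)^2).toNNReal) * v ≠ 0 := by
    intro h0
    rw [mul_eq_zero] at h0
    rcases h0 with h0 | h0
    · have := hs'
      rw [h0] at this
      simp only [NNReal.coe_zero] at this
      nlinarith
    · exact hv h0
  have hsv2 : Real.sqrt (((∑ i, ((c i)^2).toNNReal) * v : ℝ≥0) : ℝ) = t * Real.sqrt v := by
    rw [NNReal.coe_mul, hs', Real.sqrt_mul (sq_nonneg t), Real.sqrt_sq ht.le]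
  have hmapX : μX.map ℓ = gaussianReal mean ((∑ i, ((c i)^2).toNNReal) * v) :=
    pi_gaussian_weighted n X v c
  have hmeanY : ∑ i, c i * Y i = mean + t^2 := by
    rw [hmean, ← ht2, ← Finset.sum_add_distrib]
    exact Finset.sum_congr rfl fun i _ => by rw [hc]; ring
  have hmapY : μY.map ℓ = gaussianReal (mean + t^2) ((∑ i, ((c i)^2).toNNReal) * v) := by
    rw [← hmeanY]; exact pi_gaussian_weighted n Y v c
  set κ : ℝ := mean + t * Real.sqrt v * a with hκ
  set H : Set (Fin n → ℝ) := ℓ ⁻¹' (Set.Iic κ) with hH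
  have hHmeas : MeasurableSet H := hℓmeas measurableSet_Iic
  have hμXH : μX H = ENNReal.ofReal (stdNormalCDF a) := by
    rw [hH, ← Measure.map_apply hℓmeas measurableSet_Iic, hmapX,
      gaussianReal_Iic _ _ hs'0, hsv2]
    congr 2
    rw [hκ]
    field_simp
    ring
  have hμYH : μY H = ENNReal.ofReal (stdNormalCDF (a - t / Real.sqrt v)) := by
    rw [hH, ← Measure.map_apply hℓmeas measurableSet_Iic, hmapY,
      gaussianReal_Iic _ _ hs'0, hsv2]
    congr 2
    rw [hκ]
    field_simp
    ring
  set C : ℝ := ∑ i, ((X i)^2 - (Y i)^2) / 2 with hC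
  set g : Fin n → ℝ → ℝ≥0∞ := fun i u =>
    ENNReal.ofReal (Real.exp (((Y i - X i) * u + ((X i) ^ 2 - (Y i) ^ 2) / 2) / v)) with hg
  have hgmeas : ∀ i, Measurable (g i) := fun i => by rw [hg]; fun_prop
  set r : (Fin n → ℝ) → ℝ≥0∞ := fun z => ENNReal.ofReal (Real.exp ((ℓ z + C) / v)) with hr
  have hrmeas : Measurable r := by rw [hr]; fun_prop
  have hprod : (fun z => ∏ i, g i (z i)) = r := by
    funext z
    rw [hr, hg]
    simp only
    rw [← ENNReal.ofReal_prod_of_nonneg (fun i _ => (Real.exp_nonneg _)), ← Real.exp_sum]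
    congr 2
    simp only [hℓ, hC, hc, ← Finset.sum_div, ← Finset.sum_add_distrib]
    simp [Finset.sum_add_distrib, Finset.sum_div]
    rw [← Finset.sum_div, Finset.sum_sub_distrib]
  have hYD : μY = μX.withDensity r := by
    rw [hμY, hμX, ← hprod]
    exact pi_withDensity _ _ g hgmeas fun i => gaussianReal_eq_withDensity (X i) (Y i) v hv
  set r₀ : ℝ≥0∞ := ENNReal.ofReal (Real.exp ((κ + C) / v)) with hr₀
  have hmono : ∀ z w : ℝ, z ≤ w →
      ENNReal.ofReal (Real.exp ((z + C) / v)) ≤ ENNReal.ofReal (Real.exp ((w + C) / v)) := by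
    intro z w hzw
    refine ENNReal.ofReal_le_ofReal (Real.exp_le_exp.mpr ?_)
    gcongr
  have hup : ∀ z ∈ H, r z ≤ r₀ := fun z hz => hmono _ _ hz
  have hlow : ∀ z ∉ H, r₀ ≤ r z := fun z hz => hmono _ _ (le_of_not_ge hz)
  have hnp := np_ineq μX r T H hT hHmeas (ha.trans hμXH.symm) r₀ hrmeas hup hlow
  rw [← hYD] at hnp
  calc ENNReal.ofReal (stdNormalCDF (a - t / Real.sqrt v)) = μY H := hμYH.symm
    _ ≤ μY T := hnp

end Aux

lemma isoGaussian_eq_pi (d : ℕ) (σ : ℝ) (x : EuclideanSpace ℝ (Fin d))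
    (S : Set (EuclideanSpace ℝ (Fin d))) (hS : MeasurableSet S) :
    isoGaussian d σ x S
      = (Measure.pi fun i => gaussianReal (x i) (σ ^ 2).toNNReal)
          ((MeasurableEquiv.toLp 2 (Fin d → ℝ)) ⁻¹' S) := by
  set e := MeasurableEquiv.toLp 2 (Fin d → ℝ) with he
  have haddm : Measurable fun η : EuclideanSpace ℝ (Fin d) => x + η := by fun_prop
  unfold isoGaussian
  rw [Measure.map_map haddm e.measurable]
  have hcomp : ((fun η : EuclideanSpace ℝ (Fin d) => x + η) ∘ e)
      = e ∘ (fun w : Fin d → ℝ => (fun i => x i) + w) := rfl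
  rw [hcomp, ← Measure.map_map e.measurable (measurable_const_add _)]
  have hshift : Measure.map (fun w : Fin d → ℝ => (fun i => x i) + w)
      (Measure.pi fun _ : Fin d => gaussianReal 0 (σ ^ 2).toNNReal)
      = Measure.pi fun i => gaussianReal (x i) (σ ^ 2).toNNReal := by
    have hmp := (measurePreserving_pi (fun _ : Fin d => gaussianReal 0 (σ ^ 2).toNNReal)
      (fun i => gaussianReal (x i) (σ ^ 2).toNNReal)
      (f := fun i t => x i + t)
      (fun i => ⟨measurable_const_add _, by
        show Measure.map (x i + ·) (gaussianReal 0 (σ ^ 2).toNNReal)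
          = gaussianReal (x i) (σ ^ 2).toNNReal
        rw [gaussianReal_map_const_add, zero_add]⟩)).map_eq
    have heq : (fun w : Fin d → ℝ => (fun i => x i) + w) = fun a i => x i + a i := rfl
    rw [heq]
    exact hmp
  rw [hshift, MeasurableEquiv.map_apply]

/-- Lipschitz property of the probit-transformed smoothed class probability:
if `0 < p_f(x, A) < 1` everywhere, then `x ↦ Φ⁻¹(p_f(x, A))` is `(1/σ)`-Lipschitz, where
`Φinv` is the inverse of the strictly increasing continuous bijection `Φ : ℝ → (0,1)`. -/
theorem probit_classProb_lipschitz
    (d : ℕ) (hd : 1 ≤ d) (σ : ℝ) (hσ : 0 < σ)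
    {𝒜 : Type*} [Fintype 𝒜] [Nonempty 𝒜]
    (f : EuclideanSpace ℝ (Fin d) → 𝒜)
    (hf : ∀ B : 𝒜, MeasurableSet (f ⁻¹' {B}))
    (A : 𝒜)
    (hp : ∀ x : EuclideanSpace ℝ (Fin d), 0 < classProb d σ f x A ∧ classProb d σ f x A < 1)
    (Φinv : ℝ → ℝ)
    (hΦinv : ∀ a : ℝ, Φinv (stdNormalCDF a) = a) :
    ∀ x y : EuclideanSpace ℝ (Fin d),
      |Φinv (classProb d σ f x A) - Φinv (classProb d σ f y A)| ≤ ‖x - y‖ / σ := by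
  intro x y
  set v := (σ ^ 2).toNNReal with hvdef
  have hv : v ≠ 0 := by
    rw [hvdef, ne_eq, Real.toNNReal_eq_zero]
    push_neg
    positivity
  have hvcoe : ((v : ℝ)) = σ ^ 2 := Real.coe_toNNReal _ (sq_nonneg σ)
  have hsqv : Real.sqrt v = σ := by rw [hvcoe, Real.sqrt_sq hσ.le]
  set T := (MeasurableEquiv.toLp 2 (Fin d → ℝ)) ⁻¹' (f ⁻¹' {A}) with hTdef
  have hTm : MeasurableSet T :=
    (MeasurableEquiv.toLp 2 (Fin d → ℝ)).measurable (hf A)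
  have hclass : ∀ z : EuclideanSpace ℝ (Fin d),
      classProb d σ f z A = ((Measure.pi fun i => gaussianReal (z i) v) T).toReal := fun z => by
    rw [classProb, isoGaussian_eq_pi d σ z _ (hf A)]
  have hside : ∀ x' y' : EuclideanSpace ℝ (Fin d), ∀ a b : ℝ,
      stdNormalCDF a = classProb d σ f x' A → stdNormalCDF b = classProb d σ f y' A →
      a - b ≤ ‖x' - y'‖ / σ := by
    intro x' y' a b hax hby
    by_cases hxy : x' = y'
    · subst hxy
      have hab : a = b := stdNormalCDF_strictMono.injective (hax.trans hby.symm)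
      rw [hab, sub_self]
      positivity
    · set t := ‖x' - y'‖ with htdef
      have ht : 0 < t := norm_pos_iff.mpr (sub_ne_zero.mpr hxy)
      have ht2 : ∑ i, (y' i - x' i) ^ 2 = t ^ 2 := by
        rw [htdef, EuclideanSpace.norm_eq, Real.sq_sqrt (by positivity)]
        refine (Finset.sum_congr rfl fun i _ => ?_).symm
        rw [Real.norm_eq_abs, sq_abs]
        have hsub : (x' - y') i = x' i - y' i := rfl
        rw [hsub]
        ring
      have hμT : (Measure.pi fun i => gaussianReal (x' i) v) T
          = ENNReal.ofReal (stdNormalCDF a) := by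
        rw [hax, hclass x']
        exact (ENNReal.ofReal_toReal (measure_ne_top _ _)).symm
      have hkey := key_ineq v hv T hTm (fun i => x' i) (fun i => y' i) t ht ht2 a hμT
      rw [hsqv] at hkey
      have h3 := ENNReal.toReal_mono (measure_ne_top _ _) hkey
      rw [ENNReal.toReal_ofReal (stdNormalCDF_nonneg _)] at h3
      rw [hclass y'] at hby
      have h2 : stdNormalCDF (a - t / σ) ≤ stdNormalCDF b := by rw [hby]; exact h3
      have h4 := (stdNormalCDF_strictMono.le_iff_le).mp h2
      linarith
  obtain ⟨a, haΦ⟩ := stdNormalCDF_surjOn (classProb d σ f x A) (hp x).1 (hp x).2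
  obtain ⟨b, hbΦ⟩ := stdNormalCDF_surjOn (classProb d σ f y A) (hp y).1 (hp y).2
  rw [← haΦ, ← hbΦ, hΦinv a, hΦinv b]
  rw [abs_sub_le_iff]
  constructor
  · exact hside x y a b haΦ hbΦ
  · have := hside y x b a hbΦ haΦ
    rwa [norm_sub_rev] at this
end
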